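/- arXiv:math/0609146 — 4 statements merged into one kernel-verified Lean document; each statement's English description precedes it below -/
import Mathlib

section
/- Let K be a commutative ring, G a group, and n ≥ 0. If G is of type FP_n over K (i.e. the left KG-module K, with action via the augmentation, is of type FP_n), then G is of type bi-FP_n over K: there is an exact sequence 0 ← KG ← F_0 ← F_1 ← ⋯ ← F_n of (KG,KG)-bimodules with each F_i finitely generated free, where KG is a bimodule via left and right multiplication. -/
open Function LinearMap TensorProduct MulOpposite

/-- A left `R`-module `M` is of type `FP n`: there is an exact sequence
`0 ← M ← P₀ ← P₁ ← ⋯ ← Pₙ` with each `Pᵢ` a finitely generated free left `R`-module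
(wlog `Pᵢ = Fin rᵢ → R`). -/
def IsFP (R : Type*) [Ring R] (M : Type*) [AddCommGroup M] [Module R M] (n : ℕ) : Prop :=
  ∃ (r : ℕ → ℕ) (d : ∀ i : ℕ, (Fin (r (i + 1)) → R) →ₗ[R] (Fin (r i) → R))
    (e : (Fin (r 0) → R) →ₗ[R] M),
    Function.Surjective e ∧
    (0 < n → LinearMap.ker e = LinearMap.range (d 0)) ∧
    ∀ i : ℕ, i + 1 < n → LinearMap.ker (d i) = LinearMap.range (d (i + 1))

/-- Left `FP n` of a ring `R` augmented by `ε : R →+* K`: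
`K` is a left `R`-module via `ε`, required to be of type `FP n`. -/
def LeftFP {K : Type*} [CommRing K] (R : Type*) [Ring R] (ε : R →+* K) (n : ℕ) : Prop :=
  letI : Module R K := Module.compHom K ε
  IsFP R K n

/-- Right `FP n`: right `R`-modules are left `Rᵐᵒᵖ`-modules. -/
def RightFP {K : Type*} [CommRing K] (R : Type*) [Ring R] (ε : R →+* K) (n : ℕ) : Prop :=
  LeftFP Rᵐᵒᵖ (ε.fromOpposite fun _ _ => mul_comm _ _) n

/-- Left multiplication by `a` on the first factor of `A ⊗[K] A`
(the free `(A,A)`-bimodule of rank one). -/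
noncomputable def lmulT (K A : Type*) [CommRing K] [Ring A] [Algebra K A] (a : A) :
    (A ⊗[K] A) →ₗ[K] A ⊗[K] A := LinearMap.rTensor A (LinearMap.mulLeft K a)

/-- Right multiplication by `b` on the second factor of `A ⊗[K] A`. -/
noncomputable def rmulT (K A : Type*) [CommRing K] [Ring A] [Algebra K A] (b : A) :
    (A ⊗[K] A) →ₗ[K] A ⊗[K] A := LinearMap.lTensor A (LinearMap.mulRight K b)

/-- An `(A,A)`-bimodule, presented as a `K`-module `M` together with commuting left/right
multiplication operators `lact, ract`, is of type `bi-FP n`: there is an exact sequence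
`0 ← M ← F₀ ← ⋯ ← Fₙ` of `(A,A)`-bimodules where each `Fᵢ` is a finitely generated free
bimodule (wlog `Fᵢ = Fin rᵢ → A ⊗[K] A`) and the maps are bimodule maps, i.e. `K`-linear maps
commuting with the two-sided `A`-actions. -/
def IsBiFP (K A : Type*) [CommRing K] [Ring A] [Algebra K A]
    (M : Type*) [AddCommGroup M] [Module K M]
    (lact ract : A → M →ₗ[K] M) (n : ℕ) : Prop :=
  ∃ (r : ℕ → ℕ)
    (d : ∀ i : ℕ, (Fin (r (i + 1)) → A ⊗[K] A) →ₗ[K] (Fin (r i) → A ⊗[K] A))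
    (e : (Fin (r 0) → A ⊗[K] A) →ₗ[K] M),
    (∀ (i : ℕ) (a : A), d i ∘ₗ (lmulT K A a).compLeft (Fin (r (i + 1))) =
        (lmulT K A a).compLeft (Fin (r i)) ∘ₗ d i) ∧
    (∀ (i : ℕ) (b : A), d i ∘ₗ (rmulT K A b).compLeft (Fin (r (i + 1))) =
        (rmulT K A b).compLeft (Fin (r i)) ∘ₗ d i) ∧
    (∀ a : A, e ∘ₗ (lmulT K A a).compLeft (Fin (r 0)) = lact a ∘ₗ e) ∧
    (∀ b : A, e ∘ₗ (rmulT K A b).compLeft (Fin (r 0)) = ract b ∘ₗ e) ∧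
    Function.Surjective e ∧
    (0 < n → LinearMap.ker e = LinearMap.range (d 0)) ∧
    ∀ i : ℕ, i + 1 < n → LinearMap.ker (d i) = LinearMap.range (d (i + 1))

/-- `A` is of type `bi-FP n`: the bimodule `A` (by left and right multiplication)
admits a resolution by finitely generated free bimodules. -/
def BiFP (K A : Type*) [CommRing K] [Ring A] [Algebra K A] (n : ℕ) : Prop :=
  IsBiFP K A A (fun a => LinearMap.mulLeft K a) (fun b => LinearMap.mulRight K b) n

/-- `A` (augmented by `ε`) is of type weak `bi-FP n`: the bimodule `K`
(with action `a·k·a' = ε(a) k ε(a')`) admits a resolution by f.g. free bimodules. -/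
def WeakBiFP (K A : Type*) [CommRing K] [Ring A] [Algebra K A] (ε : A →ₐ[K] K) (n : ℕ) :
    Prop :=
  IsBiFP K A K (fun a => ε a • LinearMap.id) (fun b => ε b • LinearMap.id) n

/-- The standard augmentation of a monoid algebra, `b ↦ 1` for `b ∈ B`. -/
noncomputable def aug (K B : Type*) [CommRing K] [Monoid B] : MonoidAlgebra K B →ₐ[K] K :=
  MonoidAlgebra.lift K K B 1

namespace BiFPAux

variable (K : Type*) [CommRing K] (G : Type*) [Group G]

local notation "A" => MonoidAlgebra K G

noncomputable def gb : Module.Basis G K (MonoidAlgebra K G) := MonoidAlgebra.basis G K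

lemma gb_apply (g : G) : gb K G g = MonoidAlgebra.of K G g := rfl

def tw : G × G ≃ G × G where
  toFun p := (p.2, p.2⁻¹ * p.1)
  invFun p := (p.1 * p.2, p.1)
  left_inv := by rintro ⟨g, h⟩; simp
  right_inv := by rintro ⟨g, h⟩; simp

noncomputable def σT : (MonoidAlgebra K G ⊗[K] MonoidAlgebra K G) ≃ₗ[K]
    (MonoidAlgebra K G ⊗[K] MonoidAlgebra K G) :=
  ((gb K G).tensorProduct (gb K G)).equiv ((gb K G).tensorProduct (gb K G)) (tw G)

lemma σT_of (g h : G) :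
    σT K G (MonoidAlgebra.of K G g ⊗ₜ MonoidAlgebra.of K G h)
      = MonoidAlgebra.of K G h ⊗ₜ MonoidAlgebra.of K G (h⁻¹ * g) := by
  have := Module.Basis.equiv_apply ((gb K G).tensorProduct (gb K G)) (g, h)
    ((gb K G).tensorProduct (gb K G)) (tw G)
  simpa [σT, Module.Basis.tensorProduct_apply, gb_apply, tw] using this

end BiFPAux

namespace Part2

set_option maxRecDepth 8000

open BiFPAux

variable (K : Type*) [CommRing K] (G : Type*) [Group G]

lemma σT_tmul_of (u : MonoidAlgebra K G) (h : G) :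
    σT K G (u ⊗ₜ MonoidAlgebra.of K G h)
      = MonoidAlgebra.of K G h ⊗ₜ (MonoidAlgebra.of K G h⁻¹ * u) := by
  induction u using MonoidAlgebra.induction_on with
  | of g => rw [σT_of]; rw [← map_mul]
  | add f g hf hg => rw [add_tmul, map_add, hf, hg, mul_add, tmul_add]
  | smul r f hf => rw [← smul_tmul', map_smul, hf, mul_smul_comm, tmul_smul]

noncomputable def ψ (r : ℕ) :
    (MonoidAlgebra K G ⊗[K] (Fin r → MonoidAlgebra K G)) ≃ₗ[K]
      (Fin r → MonoidAlgebra K G ⊗[K] MonoidAlgebra K G) :=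
  (TensorProduct.piRight K K _ _).trans
    (LinearEquiv.piCongrRight fun _ => σT K G)

lemma ψ_tmul (r : ℕ) (u : MonoidAlgebra K G) (m : Fin r → MonoidAlgebra K G) :
    ψ K G r (u ⊗ₜ m) = fun j => σT K G (u ⊗ₜ m j) := by
  funext j
  simp [ψ]

lemma ψ_single (r : ℕ) (j : Fin r) (u v : MonoidAlgebra K G) :
    ψ K G r (u ⊗ₜ Pi.single j v) = Pi.single j (σT K G (u ⊗ₜ v)) := by
  funext j'
  rcases eq_or_ne j' j with rfl | hne
  · simp [ψ_tmul]
  · simp [ψ_tmul, Pi.single_eq_of_ne hne]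

lemma compLeft_single {M N : Type*} [AddCommGroup M] [AddCommGroup N]
    [Module K M] [Module K N] (f : M →ₗ[K] N) (r : ℕ) (j : Fin r) (t : M) :
    f.compLeft (Fin r) (Pi.single j t) = Pi.single j (f t) := by
  funext j'
  rcases eq_or_ne j' j with rfl | hne
  · simp [LinearMap.compLeft_apply]
  · simp [LinearMap.compLeft_apply, Pi.single_eq_of_ne hne]


lemma lmulT_tmul (a u v : MonoidAlgebra K G) :
    lmulT K (MonoidAlgebra K G) a (u ⊗ₜ v) = (a * u) ⊗ₜ v := by
  simp [lmulT]

lemma rmulT_tmul (b u v : MonoidAlgebra K G) :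
    rmulT K (MonoidAlgebra K G) b (u ⊗ₜ v) = u ⊗ₜ (v * b) := by
  simp [rmulT]

lemma lmulT_add (a a' : MonoidAlgebra K G) :
    lmulT K (MonoidAlgebra K G) (a + a') =
      lmulT K (MonoidAlgebra K G) a + lmulT K (MonoidAlgebra K G) a' := by
  apply TensorProduct.ext'
  intro u v
  simp [lmulT_tmul, add_mul, add_tmul]

lemma lmulT_smul (k : K) (a : MonoidAlgebra K G) :
    lmulT K (MonoidAlgebra K G) (k • a) = k • lmulT K (MonoidAlgebra K G) a := by
  apply TensorProduct.ext'
  intro u v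
  simp [lmulT_tmul, smul_mul_assoc, smul_tmul']

lemma ψ_left (r : ℕ) (g : G) :
    (lmulT K (MonoidAlgebra K G) (MonoidAlgebra.of K G g)).compLeft (Fin r) ∘ₗ
        (ψ K G r).toLinearMap
      = (ψ K G r).toLinearMap ∘ₗ
        TensorProduct.map (LinearMap.mulLeft K (MonoidAlgebra.of K G g))
          ((LinearMap.mulLeft K (MonoidAlgebra.of K G g)).compLeft (Fin r)) := by
  apply Module.Basis.ext ((gb K G).tensorProduct (Pi.basis fun _ : Fin r => gb K G))
  rintro ⟨g₀, j, h⟩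
  rw [Module.Basis.tensorProduct_apply, Pi.basis_apply]
  simp only [gb_apply, LinearMap.coe_comp, LinearEquiv.coe_coe, Function.comp_apply,
    TensorProduct.map_tmul, LinearMap.mulLeft_apply, compLeft_single, ψ_single, σT_of,
    lmulT_tmul, ← map_mul]
  simp [ψ_single, σT_of, ← map_mul, mul_assoc]

lemma ψ_right (r : ℕ) (b : MonoidAlgebra K G) :
    (rmulT K (MonoidAlgebra K G) b).compLeft (Fin r) ∘ₗ (ψ K G r).toLinearMap
      = (ψ K G r).toLinearMap ∘ₗ
        LinearMap.rTensor (Fin r → MonoidAlgebra K G) (LinearMap.mulRight K b) := by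
  apply Module.Basis.ext ((gb K G).tensorProduct (Pi.basis fun _ : Fin r => gb K G))
  rintro ⟨g₀, j, h⟩
  rw [Module.Basis.tensorProduct_apply, Pi.basis_apply]
  simp only [gb_apply, LinearMap.coe_comp, LinearEquiv.coe_coe, Function.comp_apply,
    LinearMap.rTensor_tmul, LinearMap.mulRight_apply, compLeft_single, ψ_single,
    σT_tmul_of, rmulT_tmul]
  simp [← mul_assoc, MonoidAlgebra.single_mul_single]


noncomputable def Dmap {s r : ℕ}
    (d' : (Fin s → MonoidAlgebra K G) →ₗ[MonoidAlgebra K G] (Fin r → MonoidAlgebra K G)) :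
    (Fin s → MonoidAlgebra K G ⊗[K] MonoidAlgebra K G) →ₗ[K]
      (Fin r → MonoidAlgebra K G ⊗[K] MonoidAlgebra K G) :=
  (ψ K G r).toLinearMap ∘ₗ
    (LinearMap.lTensor (MonoidAlgebra K G) (d'.restrictScalars K)) ∘ₗ
      (ψ K G s).symm.toLinearMap

lemma T_diag_comm {s r : ℕ}
    (d' : (Fin s → MonoidAlgebra K G) →ₗ[MonoidAlgebra K G] (Fin r → MonoidAlgebra K G))
    (g : G) :
    LinearMap.lTensor (MonoidAlgebra K G) (d'.restrictScalars K) ∘ₗ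
      TensorProduct.map (LinearMap.mulLeft K (MonoidAlgebra.of K G g))
        ((LinearMap.mulLeft K (MonoidAlgebra.of K G g)).compLeft (Fin s))
    = TensorProduct.map (LinearMap.mulLeft K (MonoidAlgebra.of K G g))
        ((LinearMap.mulLeft K (MonoidAlgebra.of K G g)).compLeft (Fin r)) ∘ₗ
      LinearMap.lTensor (MonoidAlgebra K G) (d'.restrictScalars K) := by
  apply TensorProduct.ext'
  intro u m
  simp only [LinearMap.coe_comp, Function.comp_apply, TensorProduct.map_tmul,
    LinearMap.lTensor_tmul]
  congr 1
  show d' ((MonoidAlgebra.of K G g) • m) = (MonoidAlgebra.of K G g) • d' m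
  exact d'.map_smul _ m

lemma Dmap_comm_left {s r : ℕ}
    (d' : (Fin s → MonoidAlgebra K G) →ₗ[MonoidAlgebra K G] (Fin r → MonoidAlgebra K G))
    (a : MonoidAlgebra K G) :
    Dmap K G d' ∘ₗ (lmulT K (MonoidAlgebra K G) a).compLeft (Fin s)
      = (lmulT K (MonoidAlgebra K G) a).compLeft (Fin r) ∘ₗ Dmap K G d' := by
  apply LinearMap.ext
  show ∀ x, Dmap K G d' ((lmulT K (MonoidAlgebra K G) a).compLeft (Fin s) x)
      = (lmulT K (MonoidAlgebra K G) a).compLeft (Fin r) (Dmap K G d' x)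
  induction a using MonoidAlgebra.induction_on with
  | of g =>
    intro x
    set y := (ψ K G s).symm x with hy
    have hx : x = ψ K G s y := (LinearEquiv.apply_symm_apply _ _).symm
    have h1 : (lmulT K (MonoidAlgebra K G) (MonoidAlgebra.of K G g)).compLeft (Fin s) x
        = ψ K G s (TensorProduct.map (LinearMap.mulLeft K (MonoidAlgebra.of K G g))
            ((LinearMap.mulLeft K (MonoidAlgebra.of K G g)).compLeft (Fin s)) y) := by
      conv_lhs => rw [hx]
      exact LinearMap.congr_fun (ψ_left K G s g) y
    have h2 := LinearMap.congr_fun (T_diag_comm K G d' g) y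
    simp only [LinearMap.coe_comp, Function.comp_apply] at h2
    have h3 := LinearMap.congr_fun (ψ_left K G r g)
      (LinearMap.lTensor (MonoidAlgebra K G) (d'.restrictScalars K) y)
    simp only [LinearMap.coe_comp, LinearEquiv.coe_coe, Function.comp_apply] at h3
    calc Dmap K G d' ((lmulT K (MonoidAlgebra K G) (MonoidAlgebra.of K G g)).compLeft (Fin s) x)
        = ψ K G r (LinearMap.lTensor (MonoidAlgebra K G) (d'.restrictScalars K)
            ((ψ K G s).symm (ψ K G s (TensorProduct.map (LinearMap.mulLeft K (MonoidAlgebra.of K G g))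
              ((LinearMap.mulLeft K (MonoidAlgebra.of K G g)).compLeft (Fin s)) y)))) := by
          rw [h1]; rfl
      _ = ψ K G r (LinearMap.lTensor (MonoidAlgebra K G) (d'.restrictScalars K)
            (TensorProduct.map (LinearMap.mulLeft K (MonoidAlgebra.of K G g))
              ((LinearMap.mulLeft K (MonoidAlgebra.of K G g)).compLeft (Fin s)) y)) := by
          rw [LinearEquiv.symm_apply_apply]
      _ = ψ K G r (TensorProduct.map (LinearMap.mulLeft K (MonoidAlgebra.of K G g))
              ((LinearMap.mulLeft K (MonoidAlgebra.of K G g)).compLeft (Fin r))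
            (LinearMap.lTensor (MonoidAlgebra K G) (d'.restrictScalars K) y)) := by rw [h2]
      _ = (lmulT K (MonoidAlgebra K G) (MonoidAlgebra.of K G g)).compLeft (Fin r)
            (ψ K G r (LinearMap.lTensor (MonoidAlgebra K G) (d'.restrictScalars K) y)) := h3.symm
      _ = (lmulT K (MonoidAlgebra K G) (MonoidAlgebra.of K G g)).compLeft (Fin r)
            (Dmap K G d' x) := rfl
  | add a a' ha ha' =>
    intro x
    have hLs : ∀ (t : ℕ) (m : Fin t → MonoidAlgebra K G ⊗[K] MonoidAlgebra K G),
        (lmulT K (MonoidAlgebra K G) (a + a')).compLeft (Fin t) m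
          = (lmulT K (MonoidAlgebra K G) a).compLeft (Fin t) m
            + (lmulT K (MonoidAlgebra K G) a').compLeft (Fin t) m := by
      intro t m
      funext j
      show lmulT K (MonoidAlgebra K G) (a + a') (m j) = _
      rw [lmulT_add]
      rfl
    rw [hLs, map_add, ha x, ha' x, hLs]
  | smul k a ha =>
    intro x
    have hLs : ∀ (t : ℕ) (m : Fin t → MonoidAlgebra K G ⊗[K] MonoidAlgebra K G),
        (lmulT K (MonoidAlgebra K G) (k • a)).compLeft (Fin t) m
          = k • (lmulT K (MonoidAlgebra K G) a).compLeft (Fin t) m := by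
      intro t m
      funext j
      show lmulT K (MonoidAlgebra K G) (k • a) (m j) = _
      rw [lmulT_smul]
      rfl
    rw [hLs, map_smul, ha x, hLs]

lemma Dmap_comm_right {s r : ℕ}
    (d' : (Fin s → MonoidAlgebra K G) →ₗ[MonoidAlgebra K G] (Fin r → MonoidAlgebra K G))
    (b : MonoidAlgebra K G) :
    Dmap K G d' ∘ₗ (rmulT K (MonoidAlgebra K G) b).compLeft (Fin s)
      = (rmulT K (MonoidAlgebra K G) b).compLeft (Fin r) ∘ₗ Dmap K G d' := by
  have hT : LinearMap.lTensor (MonoidAlgebra K G) (d'.restrictScalars K) ∘ₗ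
        LinearMap.rTensor (Fin s → MonoidAlgebra K G) (LinearMap.mulRight K b)
      = LinearMap.rTensor (Fin r → MonoidAlgebra K G) (LinearMap.mulRight K b) ∘ₗ
        LinearMap.lTensor (MonoidAlgebra K G) (d'.restrictScalars K) := by
    rw [LinearMap.lTensor_comp_rTensor, LinearMap.rTensor_comp_lTensor]
  apply LinearMap.ext
  intro x
  set y := (ψ K G s).symm x with hy
  have hx : x = ψ K G s y := (LinearEquiv.apply_symm_apply _ _).symm
  have h1 : (rmulT K (MonoidAlgebra K G) b).compLeft (Fin s) x
      = ψ K G s (LinearMap.rTensor (Fin s → MonoidAlgebra K G) (LinearMap.mulRight K b) y) := by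
    conv_lhs => rw [hx]
    exact LinearMap.congr_fun (ψ_right K G s b) y
  have h2 := LinearMap.congr_fun hT y
  simp only [LinearMap.coe_comp, Function.comp_apply] at h2
  have h3 := LinearMap.congr_fun (ψ_right K G r b)
    (LinearMap.lTensor (MonoidAlgebra K G) (d'.restrictScalars K) y)
  simp only [LinearMap.coe_comp, LinearEquiv.coe_coe, Function.comp_apply] at h3
  show Dmap K G d' ((rmulT K (MonoidAlgebra K G) b).compLeft (Fin s) x)
      = (rmulT K (MonoidAlgebra K G) b).compLeft (Fin r) (Dmap K G d' x)
  calc Dmap K G d' ((rmulT K (MonoidAlgebra K G) b).compLeft (Fin s) x)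
      = ψ K G r (LinearMap.lTensor (MonoidAlgebra K G) (d'.restrictScalars K)
          ((ψ K G s).symm (ψ K G s
            (LinearMap.rTensor (Fin s → MonoidAlgebra K G) (LinearMap.mulRight K b) y)))) := by
        rw [h1]; rfl
    _ = ψ K G r (LinearMap.lTensor (MonoidAlgebra K G) (d'.restrictScalars K)
          (LinearMap.rTensor (Fin s → MonoidAlgebra K G) (LinearMap.mulRight K b) y)) := by
        rw [LinearEquiv.symm_apply_apply]
    _ = ψ K G r (LinearMap.rTensor (Fin r → MonoidAlgebra K G) (LinearMap.mulRight K b)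
          (LinearMap.lTensor (MonoidAlgebra K G) (d'.restrictScalars K) y)) := by rw [h2]
    _ = (rmulT K (MonoidAlgebra K G) b).compLeft (Fin r)
          (ψ K G r (LinearMap.lTensor (MonoidAlgebra K G) (d'.restrictScalars K) y)) := h3.symm
    _ = (rmulT K (MonoidAlgebra K G) b).compLeft (Fin r) (Dmap K G d' x) := rfl


noncomputable def Emap {r₀ : ℕ} (e' : (Fin r₀ → MonoidAlgebra K G) →ₗ[K] K) :
    (Fin r₀ → MonoidAlgebra K G ⊗[K] MonoidAlgebra K G) →ₗ[K] MonoidAlgebra K G :=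
  (TensorProduct.rid K (MonoidAlgebra K G)).toLinearMap ∘ₗ
    (LinearMap.lTensor (MonoidAlgebra K G) e') ∘ₗ (ψ K G r₀).symm.toLinearMap

lemma E_diag_comm {r₀ : ℕ} (e' : (Fin r₀ → MonoidAlgebra K G) →ₗ[K] K)
    (he : ∀ (g : G) (m : Fin r₀ → MonoidAlgebra K G),
      e' (MonoidAlgebra.of K G g • m) = e' m) (g : G) :
    (TensorProduct.rid K (MonoidAlgebra K G)).toLinearMap ∘ₗ
        (LinearMap.lTensor (MonoidAlgebra K G) e') ∘ₗ
          TensorProduct.map (LinearMap.mulLeft K (MonoidAlgebra.of K G g))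
            ((LinearMap.mulLeft K (MonoidAlgebra.of K G g)).compLeft (Fin r₀))
      = LinearMap.mulLeft K (MonoidAlgebra.of K G g) ∘ₗ
          (TensorProduct.rid K (MonoidAlgebra K G)).toLinearMap ∘ₗ
            (LinearMap.lTensor (MonoidAlgebra K G) e') := by
  apply TensorProduct.ext'
  intro u m
  simp only [LinearMap.coe_comp, LinearEquiv.coe_coe, Function.comp_apply,
    TensorProduct.map_tmul, LinearMap.lTensor_tmul, TensorProduct.rid_tmul,
    LinearMap.mulLeft_apply]
  have h1 : (LinearMap.mulLeft K (MonoidAlgebra.of K G g)).compLeft (Fin r₀) m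
      = MonoidAlgebra.of K G g • m := rfl
  rw [h1, he g m, mul_smul_comm]

lemma E_rid_comm {r₀ : ℕ} (e' : (Fin r₀ → MonoidAlgebra K G) →ₗ[K] K)
    (b : MonoidAlgebra K G) :
    (TensorProduct.rid K (MonoidAlgebra K G)).toLinearMap ∘ₗ
        (LinearMap.lTensor (MonoidAlgebra K G) e') ∘ₗ
          LinearMap.rTensor (Fin r₀ → MonoidAlgebra K G) (LinearMap.mulRight K b)
      = LinearMap.mulRight K b ∘ₗ
          (TensorProduct.rid K (MonoidAlgebra K G)).toLinearMap ∘ₗ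
            (LinearMap.lTensor (MonoidAlgebra K G) e') := by
  apply TensorProduct.ext'
  intro u m
  simp only [LinearMap.coe_comp, LinearEquiv.coe_coe, Function.comp_apply,
    LinearMap.rTensor_tmul, LinearMap.lTensor_tmul, TensorProduct.rid_tmul,
    LinearMap.mulRight_apply]
  rw [smul_mul_assoc]

lemma Emap_comm_left {r₀ : ℕ} (e' : (Fin r₀ → MonoidAlgebra K G) →ₗ[K] K)
    (he : ∀ (g : G) (m : Fin r₀ → MonoidAlgebra K G),
      e' (MonoidAlgebra.of K G g • m) = e' m) (a : MonoidAlgebra K G) :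
    Emap K G e' ∘ₗ (lmulT K (MonoidAlgebra K G) a).compLeft (Fin r₀)
      = LinearMap.mulLeft K a ∘ₗ Emap K G e' := by
  apply LinearMap.ext
  show ∀ x, Emap K G e' ((lmulT K (MonoidAlgebra K G) a).compLeft (Fin r₀) x)
      = a * Emap K G e' x
  induction a using MonoidAlgebra.induction_on with
  | of g =>
    intro x
    set y := (ψ K G r₀).symm x with hy
    have hx : x = ψ K G r₀ y := (LinearEquiv.apply_symm_apply _ _).symm
    have h1 : (lmulT K (MonoidAlgebra K G) (MonoidAlgebra.of K G g)).compLeft (Fin r₀) x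
        = ψ K G r₀ (TensorProduct.map (LinearMap.mulLeft K (MonoidAlgebra.of K G g))
            ((LinearMap.mulLeft K (MonoidAlgebra.of K G g)).compLeft (Fin r₀)) y) := by
      conv_lhs => rw [hx]
      exact LinearMap.congr_fun (ψ_left K G r₀ g) y
    have h2 := LinearMap.congr_fun (E_diag_comm K G e' he g) y
    simp only [LinearMap.coe_comp, LinearEquiv.coe_coe, Function.comp_apply,
      LinearMap.mulLeft_apply] at h2
    calc Emap K G e' ((lmulT K (MonoidAlgebra K G) (MonoidAlgebra.of K G g)).compLeft (Fin r₀) x)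
        = TensorProduct.rid K (MonoidAlgebra K G) (LinearMap.lTensor (MonoidAlgebra K G) e'
            ((ψ K G r₀).symm (ψ K G r₀
              (TensorProduct.map (LinearMap.mulLeft K (MonoidAlgebra.of K G g))
                ((LinearMap.mulLeft K (MonoidAlgebra.of K G g)).compLeft (Fin r₀)) y)))) := by
          rw [h1]; rfl
      _ = TensorProduct.rid K (MonoidAlgebra K G) (LinearMap.lTensor (MonoidAlgebra K G) e'
            (TensorProduct.map (LinearMap.mulLeft K (MonoidAlgebra.of K G g))
              ((LinearMap.mulLeft K (MonoidAlgebra.of K G g)).compLeft (Fin r₀)) y)) := by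
          rw [LinearEquiv.symm_apply_apply]
      _ = MonoidAlgebra.of K G g * TensorProduct.rid K (MonoidAlgebra K G)
            (LinearMap.lTensor (MonoidAlgebra K G) e' y) := h2
      _ = MonoidAlgebra.of K G g * Emap K G e' x := rfl
  | add a a' ha ha' =>
    intro x
    have hLs : ∀ (m : Fin r₀ → MonoidAlgebra K G ⊗[K] MonoidAlgebra K G),
        (lmulT K (MonoidAlgebra K G) (a + a')).compLeft (Fin r₀) m
          = (lmulT K (MonoidAlgebra K G) a).compLeft (Fin r₀) m
            + (lmulT K (MonoidAlgebra K G) a').compLeft (Fin r₀) m := by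
      intro m
      funext j
      show lmulT K (MonoidAlgebra K G) (a + a') (m j) = _
      rw [lmulT_add]
      rfl
    rw [hLs, map_add, ha x, ha' x, add_mul]
  | smul k a ha =>
    intro x
    have hLs : ∀ (m : Fin r₀ → MonoidAlgebra K G ⊗[K] MonoidAlgebra K G),
        (lmulT K (MonoidAlgebra K G) (k • a)).compLeft (Fin r₀) m
          = k • (lmulT K (MonoidAlgebra K G) a).compLeft (Fin r₀) m := by
      intro m
      funext j
      show lmulT K (MonoidAlgebra K G) (k • a) (m j) = _
      rw [lmulT_smul]
      rfl
    rw [hLs, map_smul, ha x, smul_mul_assoc]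

lemma Emap_comm_right {r₀ : ℕ} (e' : (Fin r₀ → MonoidAlgebra K G) →ₗ[K] K)
    (b : MonoidAlgebra K G) :
    Emap K G e' ∘ₗ (rmulT K (MonoidAlgebra K G) b).compLeft (Fin r₀)
      = LinearMap.mulRight K b ∘ₗ Emap K G e' := by
  apply LinearMap.ext
  intro x
  set y := (ψ K G r₀).symm x with hy
  have hx : x = ψ K G r₀ y := (LinearEquiv.apply_symm_apply _ _).symm
  have h1 : (rmulT K (MonoidAlgebra K G) b).compLeft (Fin r₀) x
      = ψ K G r₀ (LinearMap.rTensor (Fin r₀ → MonoidAlgebra K G) (LinearMap.mulRight K b) y) := by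
    conv_lhs => rw [hx]
    exact LinearMap.congr_fun (ψ_right K G r₀ b) y
  have h2 := LinearMap.congr_fun (E_rid_comm K G e' b) y
  simp only [LinearMap.coe_comp, LinearEquiv.coe_coe, Function.comp_apply,
    LinearMap.mulRight_apply] at h2
  show Emap K G e' ((rmulT K (MonoidAlgebra K G) b).compLeft (Fin r₀) x)
      = Emap K G e' x * b
  calc Emap K G e' ((rmulT K (MonoidAlgebra K G) b).compLeft (Fin r₀) x)
      = TensorProduct.rid K (MonoidAlgebra K G) (LinearMap.lTensor (MonoidAlgebra K G) e'
          ((ψ K G r₀).symm (ψ K G r₀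
            (LinearMap.rTensor (Fin r₀ → MonoidAlgebra K G) (LinearMap.mulRight K b) y)))) := by
        rw [h1]; rfl
    _ = TensorProduct.rid K (MonoidAlgebra K G) (LinearMap.lTensor (MonoidAlgebra K G) e'
          (LinearMap.rTensor (Fin r₀ → MonoidAlgebra K G) (LinearMap.mulRight K b) y)) := by
        rw [LinearEquiv.symm_apply_apply]
    _ = TensorProduct.rid K (MonoidAlgebra K G)
          (LinearMap.lTensor (MonoidAlgebra K G) e' y) * b := h2
    _ = Emap K G e' x * b := rfl

lemma conj_ker_range {R : Type*} [CommRing R] {M N P M' N' P' : Type*}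
    [AddCommGroup M] [AddCommGroup N] [AddCommGroup P]
    [AddCommGroup M'] [AddCommGroup N'] [AddCommGroup P']
    [Module R M] [Module R N] [Module R P] [Module R M'] [Module R N'] [Module R P']
    {f : M →ₗ[R] N} {g : N →ₗ[R] P} (α : M' ≃ₗ[R] M) (β : N ≃ₗ[R] N') (γ : P ≃ₗ[R] P')
    (hfg : Function.Exact f g) :
    LinearMap.ker (γ.toLinearMap ∘ₗ g ∘ₗ β.symm.toLinearMap)
      = LinearMap.range (β.toLinearMap ∘ₗ f ∘ₗ α.toLinearMap) := by
  ext x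
  simp only [LinearMap.mem_ker, LinearMap.mem_range, LinearMap.coe_comp, LinearEquiv.coe_coe,
    Function.comp_apply, EmbeddingLike.map_eq_zero_iff]
  rw [hfg (β.symm x)]
  constructor
  · rintro ⟨m, hm⟩
    exact ⟨α.symm m, by simp [hm]⟩
  · rintro ⟨z, hz⟩
    exact ⟨α z, by rw [← hz]; simp⟩

end Part2


/-- If a group `G` is of type `FP n` over `K` (the left `KG`-module `K` via
the augmentation is of type `FP n`), then `G` is of type bi-`FP n` over `K`. -/
theorem group_leftFP_imp_biFP
    (K : Type*) [CommRing K] (G : Type*) [Group G] (n : ℕ)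
    (h : LeftFP (MonoidAlgebra K G) (aug K G).toRingHom n) :
    BiFP K (MonoidAlgebra K G) n := by
  obtain ⟨r, d, e', hsurj, he, hex0, hexi⟩ :
      ∃ (r : ℕ → ℕ)
        (d : ∀ i : ℕ, (Fin (r (i + 1)) → MonoidAlgebra K G) →ₗ[MonoidAlgebra K G]
          (Fin (r i) → MonoidAlgebra K G))
        (e' : (Fin (r 0) → MonoidAlgebra K G) →ₗ[K] K),
        Function.Surjective ⇑e' ∧
        (∀ (g : G) (m : Fin (r 0) → MonoidAlgebra K G),
          e' (MonoidAlgebra.of K G g • m) = e' m) ∧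
        (0 < n → Function.Exact ⇑(d 0) ⇑e') ∧
        (∀ i : ℕ, i + 1 < n → Function.Exact ⇑(d (i + 1)) ⇑(d i)) := by
    letI goodM : ∀ t : ℕ, Module (MonoidAlgebra K G) (Fin t → MonoidAlgebra K G) :=
      fun t => inferInstance
    letI goodS : ∀ t : ℕ, SMul (MonoidAlgebra K G) (Fin t → MonoidAlgebra K G) :=
      fun t => inferInstance
    letI goodKM : ∀ t : ℕ, Module K (Fin t → MonoidAlgebra K G) := fun t => inferInstance
    letI goodT : ∀ t : ℕ, IsScalarTower K (MonoidAlgebra K G) (Fin t → MonoidAlgebra K G) :=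
      fun t => inferInstance
    letI instA : Module (MonoidAlgebra K G) K := Module.compHom K (aug K G).toRingHom
    haveI : IsScalarTower K (MonoidAlgebra K G) K := by
      constructor
      intro k a x
      show (aug K G) (k • a) * x = k • ((aug K G) a * x)
      rw [map_smul]
      simp [smul_eq_mul, mul_assoc]
    obtain ⟨r, d, e, hsurj, h0, hsucc⟩ := h
    refine ⟨r, d, e.restrictScalars K, ?_, ?_, ?_, ?_⟩
    · exact hsurj
    · intro g m
      calc e (MonoidAlgebra.of K G g • m)
          = aug K G (MonoidAlgebra.of K G g) * e m := e.map_smul' _ m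
        _ = e m := by simp [aug]
    · intro hn
      show Function.Exact ⇑(d 0) ⇑(e.restrictScalars K)
      rw [LinearMap.coe_restrictScalars]
      exact LinearMap.exact_iff.mpr (h0 hn)
    · intro i hi
      exact LinearMap.exact_iff.mpr (hsucc i hi)
  haveI : Module.Free K (MonoidAlgebra K G) := Module.Free.of_basis (BiFPAux.gb K G)
  refine ⟨r, fun i => Part2.Dmap K G (d i), Part2.Emap K G e',
    fun i a => Part2.Dmap_comm_left K G (d i) a,
    fun i b => Part2.Dmap_comm_right K G (d i) b,
    fun a => Part2.Emap_comm_left K G e' he a,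
    fun b => Part2.Emap_comm_right K G e' b,
    ?_, ?_, ?_⟩
  · have h2 := LinearMap.lTensor_surjective (MonoidAlgebra K G) hsurj
    exact ((TensorProduct.rid K (MonoidAlgebra K G)).surjective.comp
      (h2.comp (Part2.ψ K G (r 0)).symm.surjective))
  · intro hn
    have hT := Module.Flat.lTensor_exact (R := K) (MonoidAlgebra K G)
      (f := (d 0).restrictScalars K) (g := e')
      (by rw [LinearMap.coe_restrictScalars]; exact hex0 hn)
    exact Part2.conj_ker_range (Part2.ψ K G (r 1)).symm (Part2.ψ K G (r 0))
      (TensorProduct.rid K (MonoidAlgebra K G)) hT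
  · intro i hi
    have hT := Module.Flat.lTensor_exact (R := K) (MonoidAlgebra K G)
      (f := (d (i + 1)).restrictScalars K) (g := (d i).restrictScalars K)
      (by rw [LinearMap.coe_restrictScalars, LinearMap.coe_restrictScalars]; exact hexi i hi)
    exact Part2.conj_ker_range (Part2.ψ K G (r (i + 2))).symm (Part2.ψ K G (r (i + 1)))
      (Part2.ψ K G (r i)) hT
end

section
/- Let K be a commutative ring and n ≥ 0. Suppose the monoid C is a retract of the monoid B, i.e. there are monoid homomorphisms ψ: B → C and φ: C → B with ψ ∘ φ = id_C. If B is of type left-FP_n over K, then C is of type left-FP_n over K; likewise if B is of type right-FP_n over K, then so is C. -/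
open Function LinearMap TensorProduct MulOpposite

section A
variable {R : Type*} [Ring R] {M M' : Type*} [AddCommGroup M] [Module R M]
  [AddCommGroup M'] [Module R M']

def stdv (R : Type*) [Ring R] (q : ℕ) (t : Fin q) : Fin q → R := fun j => if t = j then 1 else 0

theorem lin_expand {q : ℕ} (f : (Fin q → R) →ₗ[R] M) (x : Fin q → R) :
    f x = ∑ t, x t • f (stdv R q t) := by
  conv_lhs => rw [pi_eq_sum_univ x, map_sum]
  simp only [map_smul]
  rfl

def lcomb {q : ℕ} (v : Fin q → M) : (Fin q → R) →ₗ[R] M where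
  toFun x := ∑ t, x t • v t
  map_add' x y := by simp [add_smul, Finset.sum_add_distrib]
  map_smul' c x := by simp [mul_smul, Finset.smul_sum]

@[simp] theorem lcomb_apply {q : ℕ} (v : Fin q → M) (x : Fin q → R) :
    lcomb v x = ∑ t, x t • v t := rfl

theorem lcomb_std {q : ℕ} (v : Fin q → M) (t : Fin q) : lcomb v (stdv R q t) = v t := by
  simp [lcomb, stdv, ite_smul]

theorem isFP_congr (f : M ≃ₗ[R] M') {n : ℕ} (h : IsFP R M n) : IsFP R M' n := by
  obtain ⟨r, d, e, hs, h0, hi⟩ := h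
  refine ⟨r, d, f.toLinearMap.comp e, f.surjective.comp hs, fun hn => ?_, hi⟩
  rw [LinearMap.ker_comp, f.ker, ← h0 hn]
  rfl

variable {S : Type*} [Ring S] {N : Type*} [AddCommGroup N] [Module S N]

theorem hom_expand (Ψ : S →+* R) (p : N → M) (hpa : ∀ x y, p (x + y) = p x + p y)
    (hps : ∀ (c : S) x, p (c • x) = Ψ c • p x) {q : ℕ} (L : (Fin q → S) →ₗ[S] N)
    (s : Fin q → S) : p (L s) = ∑ t, Ψ (s t) • p (L (stdv S q t)) := by
  conv_lhs => rw [lin_expand L s]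
  rw [show p (∑ t, s t • L (stdv S q t)) = ∑ t, p (s t • L (stdv S q t)) from
    map_sum (AddMonoidHom.mk' p hpa) _ _]
  exact Finset.sum_congr rfl fun t _ => hps _ _

theorem hom_zero (p : N → M) (hpa : ∀ x y, p (x + y) = p x + p y) : p 0 = 0 :=
  (AddMonoidHom.mk' p hpa).map_zero

end A

section Aux2
variable {R : Type*} [Ring R] {M : Type*} [AddCommGroup M] [Module R M]

/-- extract: from a resolution of `M` of length `n+1`, get a f.g. cover whose kernel
has a resolution of length `n`. -/
theorem isFP_shift {n : ℕ} (h : IsFP R M (n + 1)) :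
    ∃ (k : ℕ) (e : (Fin k → R) →ₗ[R] M), Surjective e ∧ IsFP R (LinearMap.ker e) n := by
  obtain ⟨r, d, e, hs, h0, hi⟩ := h
  have hker : LinearMap.ker e = LinearMap.range (d 0) := h0 (Nat.succ_pos n)
  have hd0 : ∀ x, d 0 x ∈ LinearMap.ker e := fun x => hker ▸ LinearMap.mem_range_self _ x
  refine ⟨r 0, e, hs, fun j => r (j + 1), fun i => d (i + 1),
    LinearMap.codRestrict (LinearMap.ker e) (d 0) hd0, ?_, fun hn => ?_, fun i hi' => ?_⟩
  · rintro ⟨y, hy⟩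
    rw [hker] at hy
    obtain ⟨x, hx⟩ := hy
    exact ⟨x, Subtype.ext (by simpa using hx)⟩
  · rw [LinearMap.ker_codRestrict]
    exact hi 0 (by omega)
  · exact hi (i + 1) (by omega)

/-- assemble: cover of `M` with kernel of type `FP n` gives `FP (n+1)`. -/
theorem isFP_assemble {n m : ℕ} (eQ : (Fin m → R) →ₗ[R] M) (hs : Surjective eQ)
    (h : IsFP R (LinearMap.ker eQ) n) : IsFP R M (n + 1) := by
  obtain ⟨r, d, e, hse, h0, hi⟩ := h
  refine ⟨fun j => Nat.casesOn j m r,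
    fun i => Nat.casesOn i ((LinearMap.ker eQ).subtype ∘ₗ e) d, eQ, hs, fun _ => ?_, ?_⟩
  · show LinearMap.ker eQ = LinearMap.range ((LinearMap.ker eQ).subtype ∘ₗ e)
    rw [LinearMap.range_comp, LinearMap.range_eq_top.mpr hse, Submodule.map_subtype_top]
  · rintro (_ | i) hlt
    · show LinearMap.ker ((LinearMap.ker eQ).subtype ∘ₗ e) = LinearMap.range (d 0)
      rw [LinearMap.ker_comp, Submodule.ker_subtype, Submodule.comap_bot]
      exact h0 (by omega)
    · exact hi i (by omega)

end Aux2

section Aux3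
variable {R : Type*} [Ring R] {M : Type*} [AddCommGroup M] [Module R M]

/-- splitting equivalence for free modules -/
noncomputable def finAddEquiv (m k : ℕ) :
    (Fin (m + k) → R) ≃ₗ[R] (Fin m → R) × (Fin k → R) :=
  (LinearEquiv.funCongrLeft R R (finSumFinEquiv (m := m) (n := k))).trans
    (LinearEquiv.sumArrowLequivProdArrow _ _ R R)

/-- `FP n` is stable under adding a f.g. free direct summand. -/
theorem isFP_prodFree {n : ℕ} (m : ℕ) (h : IsFP R M n) :
    IsFP R ((Fin m → R) × M) n := by
  obtain ⟨r, d, e, hs, h0, hi⟩ := h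
  let E := (finAddEquiv m (r 0) (R := R))
  refine ⟨fun j => Nat.casesOn j (m + r 0) (fun i => r (i + 1)),
    fun i => Nat.casesOn i (E.symm.toLinearMap ∘ₗ LinearMap.prod 0 (d 0)) (fun i => d (i + 1)),
    (LinearMap.id.prodMap e) ∘ₗ E.toLinearMap,
    ?_, fun hn => ?_, ?_⟩
  · exact (Function.Surjective.prodMap (fun x => ⟨x, rfl⟩) hs).comp E.surjective
  · show LinearMap.ker ((LinearMap.id.prodMap e) ∘ₗ E.toLinearMap)
      = LinearMap.range (E.symm.toLinearMap ∘ₗ LinearMap.prod 0 (d 0))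
    rw [LinearMap.ker_comp, LinearMap.range_comp]
    rw [show (E.symm.toLinearMap : ((Fin m → R) × (Fin (r 0) → R)) →ₗ[R] (Fin (m + r 0) → R))
      = (E.symm : ((Fin m → R) × (Fin (r 0) → R)) ≃ₗ[R] _).toLinearMap from rfl]
    rw [Submodule.map_equiv_eq_comap_symm E.symm, LinearEquiv.symm_symm]
    congr 1
    ext ⟨a, y⟩
    simp only [LinearMap.mem_ker, LinearMap.prodMap_apply, LinearMap.id_coe, id_eq,
      Prod.mk_eq_zero, Submodule.mem_comap, LinearMap.mem_range, LinearMap.prod_apply,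
      Function.prod, Prod.mk.injEq, LinearMap.zero_apply]
    constructor
    · rintro ⟨ha, hy⟩
      rw [← LinearMap.mem_ker, h0 hn] at hy
      obtain ⟨x, hx⟩ := hy
      exact ⟨x, ha.symm, hx⟩
    · rintro ⟨x, ha, hx⟩
      refine ⟨ha.symm, ?_⟩
      rw [← LinearMap.mem_ker, h0 hn]
      exact ⟨x, hx⟩
  · rintro (_ | i) hlt
    · show LinearMap.ker (E.symm.toLinearMap ∘ₗ LinearMap.prod 0 (d 0)) = LinearMap.range (d 1)
      rw [LinearMap.ker_comp, LinearEquiv.ker, Submodule.comap_bot, LinearMap.ker_prod,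
        LinearMap.ker_zero, top_inf_eq]
      exact hi 0 (by omega)
    · exact hi (i + 1) (by omega)

end Aux3

section Main
universe u v

theorem isFP_retract (n : ℕ) : ∀ {R : Type u} {S : Type v} [Ring R] [Ring S]
    (Φ : R →+* S) (Ψ : S →+* R), (∀ x, Ψ (Φ x) = x) →
    ∀ (M : Type u) (N : Type v) [AddCommGroup M] [Module R M] [AddCommGroup N] [Module S N]
    (i : M → N) (p : N → M),
    (∀ x y, i (x + y) = i x + i y) → (∀ (c : R) x, i (c • x) = Φ c • i x) →
    (∀ x y, p (x + y) = p x + p y) → (∀ (c : S) x, p (c • x) = Ψ c • p x) →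
    (∀ x, p (i x) = x) → IsFP S N n → IsFP R M n := by
  induction n with
  | zero =>
    intro R S _ _ Φ Ψ hΨΦ M N _ _ _ _ i p hia his hpa hps hpi hN
    obtain ⟨r, dS, eP, hsP, -, -⟩ := hN
    set eQ : (Fin (r 0) → R) →ₗ[R] M := lcomb (fun t => p (eP (stdv S (r 0) t))) with heQ
    have key3 : ∀ s : Fin (r 0) → S, eQ (fun t => Ψ (s t)) = p (eP s) := by
      intro s
      rw [hom_expand Ψ p hpa hps eP s]
      rfl
    refine ⟨fun _ => r 0, fun _ => 0, eQ, ?_, fun h => absurd h (lt_irrefl 0),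
      fun i h => absurd h (by omega)⟩
    intro x
    obtain ⟨s, hsx⟩ := hsP (i x)
    exact ⟨fun t => Ψ (s t), by rw [key3, hsx, hpi]⟩
  | succ n ih =>
    intro R S _ _ Φ Ψ hΨΦ M N _ _ _ _ i p hia his hpa hps hpi hN
    have hi0 : i 0 = 0 := hom_zero i hia
    have hp0 : p 0 = 0 := hom_zero p hpa
    obtain ⟨k, eP, hsP, hFP⟩ := isFP_shift hN
    -- the f.g. cover of M
    set eQ : (Fin k → R) →ₗ[R] M := lcomb (fun t => p (eP (stdv S k t))) with heQ
    have key3 : ∀ s : Fin k → S, eQ (fun t => Ψ (s t)) = p (eP s) := by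
      intro s
      rw [hom_expand Ψ p hpa hps eP s]
      rfl
    have hsQ : Surjective eQ := by
      intro x
      obtain ⟨s, hsx⟩ := hsP (i x)
      exact ⟨fun t => Ψ (s t), by rw [key3, hsx, hpi]⟩
    -- the comparison cover of N
    set f1 : (Fin k → S) →ₗ[S] N := lcomb (fun j => i (eQ (stdv R k j))) with hf1
    have key1 : ∀ v : Fin k → R, f1 (fun j => Φ (v j)) = i (eQ v) := by
      intro v
      rw [hom_expand Φ i hia his eQ v]
      rfl
    have key2 : ∀ a : Fin k → S, eQ (fun j => Ψ (a j)) = p (f1 a) := by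
      intro a
      have h2 : ∀ t : Fin k, p (f1 (stdv S k t)) = eQ (stdv R k t) := by
        intro t
        rw [show f1 (stdv S k t) = i (eQ (stdv R k t)) from by rw [hf1]; exact lcomb_std _ _,
          hpi]
      rw [hom_expand Ψ p hpa hps f1 a, lin_expand eQ (fun j => Ψ (a j))]
      exact Finset.sum_congr rfl fun t _ => by rw [h2]
    set e'' : ((Fin k → S) × (Fin k → S)) →ₗ[S] N := LinearMap.coprod f1 eP with he''
    have he''ap : ∀ ab : (Fin k → S) × (Fin k → S), e'' ab = f1 ab.1 + eP ab.2 := by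
      intro ab
      rw [he'']
      exact LinearMap.coprod_apply _ _ _
    have hsE : Surjective e'' := by
      intro y
      obtain ⟨s, hs⟩ := hsP y
      refine ⟨(0, s), ?_⟩
      rw [he''ap, map_zero, zero_add, hs]
    -- σ : splitting data
    choose uσ huσ using fun j => hsP (- f1 (stdv S k j))
    set σ : (Fin k → S) →ₗ[S] (Fin k → S) := lcomb uσ with hσdef
    have hσ : ∀ a, eP (σ a) = - f1 a := by
      intro a
      have h1 : eP (σ a) = ∑ j, a j • eP (uσ j) := by
        rw [show σ a = ∑ j, a j • uσ j from by rw [hσdef]; rfl, map_sum]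
        exact Finset.sum_congr rfl fun t _ => by rw [map_smul]
      rw [h1]
      simp only [huσ, smul_neg]
      rw [lin_expand f1 a, ← Finset.sum_neg_distrib]
    -- the equivalence (Fin k → S) × ker eP ≃ ker e''
    have hGmem : ∀ ax : (Fin k → S) × (LinearMap.ker eP), (ax.1, σ ax.1 + ax.2.1) ∈
        LinearMap.ker e'' := by
      intro ax
      rw [LinearMap.mem_ker, he''ap, map_add, hσ]
      have h2 : eP ax.2.1 = 0 := ax.2.2
      rw [h2]
      abel
    have hGmem' : ∀ z : LinearMap.ker e'', z.1.2 - σ z.1.1 ∈ LinearMap.ker eP := by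
      intro z
      have hz : f1 z.1.1 + eP z.1.2 = 0 := by rw [← he''ap]; exact z.2
      rw [LinearMap.mem_ker, map_sub, hσ, sub_neg_eq_add, add_comm]
      exact hz
    set G : ((Fin k → S) × (LinearMap.ker eP)) ≃ₗ[S] (LinearMap.ker e'') :=
      { toFun := fun ax => ⟨(ax.1, σ ax.1 + ax.2.1), hGmem ax⟩
        map_add' := fun ax bx => by
          apply Subtype.ext
          refine Prod.ext ?_ ?_
          · rfl
          · show σ (ax.1 + bx.1) + (ax.2.1 + bx.2.1) = (σ ax.1 + ax.2.1) + (σ bx.1 + bx.2.1)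
            rw [map_add]
            abel
        map_smul' := fun c ax => by
          apply Subtype.ext
          refine Prod.ext ?_ ?_
          · rfl
          · show σ (c • ax.1) + c • ax.2.1 = c • (σ ax.1 + ax.2.1)
            rw [map_smul, smul_add]
        invFun := fun z => (z.1.1, ⟨z.1.2 - σ z.1.1, hGmem' z⟩)
        left_inv := fun ax => by
          refine Prod.ext rfl ?_
          apply Subtype.ext
          show σ ax.1 + ax.2.1 - σ ax.1 = ax.2.1
          abel
        right_inv := fun z => by
          apply Subtype.ext
          refine Prod.ext rfl ?_
          show σ z.1.1 + (z.1.2 - σ z.1.1) = z.1.2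
          abel }
    have hK'' : IsFP S (LinearMap.ker e'') n := isFP_congr G (isFP_prodFree k hFP)
    -- retract data on kernels
    choose uQ huQ using fun t => hsQ (p (eP (stdv S k t)))
    set p2 : (Fin k → S) → (Fin k → R) := fun s => lcomb uQ (fun t => Ψ (s t)) with hp2
    have key4 : ∀ s, eQ (p2 s) = p (eP s) := by
      intro s
      rw [show p2 s = ∑ t, Ψ (s t) • uQ t from by rw [hp2]; rfl, map_sum,
        hom_expand Ψ p hpa hps eP s]
      exact Finset.sum_congr rfl fun t _ => by rw [map_smul, huQ]
    have hp2add : ∀ s s', p2 (s + s') = p2 s + p2 s' := by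
      intro s s'
      rw [hp2]
      show lcomb uQ (fun t => Ψ ((s + s') t)) = lcomb uQ (fun t => Ψ (s t)) +
        lcomb uQ (fun t => Ψ (s' t))
      rw [show (fun t => Ψ ((s + s') t)) = (fun t => Ψ (s t)) + (fun t => Ψ (s' t)) from
        funext fun t => by show Ψ (s t + s' t) = _; rw [map_add]; rfl, map_add]
    have hp2smul : ∀ (c : S) s, p2 (c • s) = Ψ c • p2 s := by
      intro c s
      rw [hp2]
      show lcomb uQ (fun t => Ψ ((c • s) t)) = Ψ c • lcomb uQ (fun t => Ψ (s t))
      rw [show (fun t => Ψ ((c • s) t)) = Ψ c • (fun t => Ψ (s t)) from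
        funext fun t => by show Ψ (c * s t) = _; rw [map_mul]; rfl, map_smul]
    have hp20 : p2 0 = 0 := by
      rw [hp2]
      show lcomb uQ (fun _ => Ψ 0) = 0
      rw [show (fun _ : Fin k => Ψ 0) = (0 : Fin k → R) from funext fun _ => map_zero Ψ,
        map_zero]
    -- the retract maps on kernels
    have hiNmem : ∀ x : LinearMap.ker eQ, ((fun j => Φ (x.1 j)), (0 : Fin k → S)) ∈
        LinearMap.ker e'' := by
      intro x
      rw [LinearMap.mem_ker, he''ap, map_zero, add_zero, key1]
      have hx : eQ x.1 = 0 := x.2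
      rw [hx, hi0]
    set iN : (LinearMap.ker eQ) → (LinearMap.ker e'') := fun x =>
      ⟨((fun j => Φ (x.1 j)), 0), hiNmem x⟩ with hiN
    have hpNmem : ∀ z : LinearMap.ker e'', (fun j => Ψ (z.1.1 j)) + p2 z.1.2 ∈
        LinearMap.ker eQ := by
      intro z
      rw [LinearMap.mem_ker, map_add, key2, key4, ← hpa]
      have hz : f1 z.1.1 + eP z.1.2 = 0 := by rw [← he''ap]; exact z.2
      rw [hz, hp0]
    set pN : (LinearMap.ker e'') → (LinearMap.ker eQ) := fun z =>
      ⟨(fun j => Ψ (z.1.1 j)) + p2 z.1.2, hpNmem z⟩ with hpN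
    have hiaN : ∀ x y, iN (x + y) = iN x + iN y := by
      intro x y
      apply Subtype.ext
      refine Prod.ext ?_ ?_
      · show (fun j => Φ ((x.1 + y.1) j)) = (fun j => Φ (x.1 j)) + (fun j => Φ (y.1 j))
        exact funext fun j => by show Φ (x.1 j + y.1 j) = _; rw [map_add]; rfl
      · show (0 : Fin k → S) = 0 + 0
        rw [add_zero]
    have hisN : ∀ (c : R) x, iN (c • x) = Φ c • iN x := by
      intro c x
      apply Subtype.ext
      refine Prod.ext ?_ ?_
      · show (fun j => Φ ((c • x.1) j)) = Φ c • (fun j => Φ (x.1 j))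
        exact funext fun j => by show Φ (c * x.1 j) = _; rw [map_mul]; rfl
      · show (0 : Fin k → S) = Φ c • 0
        rw [smul_zero]
    have hpaN : ∀ x y, pN (x + y) = pN x + pN y := by
      intro x y
      apply Subtype.ext
      show (fun j => Ψ ((x.1.1 + y.1.1) j)) + p2 (x.1.2 + y.1.2) =
        ((fun j => Ψ (x.1.1 j)) + p2 x.1.2) + ((fun j => Ψ (y.1.1 j)) + p2 y.1.2)
      rw [hp2add, show (fun j => Ψ ((x.1.1 + y.1.1) j)) =
        (fun j => Ψ (x.1.1 j)) + (fun j => Ψ (y.1.1 j)) from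
        funext fun j => by show Ψ (x.1.1 j + y.1.1 j) = _; rw [map_add]; rfl]
      abel
    have hpsN : ∀ (c : S) x, pN (c • x) = Ψ c • pN x := by
      intro c x
      apply Subtype.ext
      show (fun j => Ψ ((c • x.1.1) j)) + p2 (c • x.1.2) =
        Ψ c • ((fun j => Ψ (x.1.1 j)) + p2 x.1.2)
      rw [hp2smul, show (fun j => Ψ ((c • x.1.1) j)) = Ψ c • (fun j => Ψ (x.1.1 j)) from
        funext fun j => by show Ψ (c * x.1.1 j) = _; rw [map_mul]; rfl, smul_add]
    have hpiN : ∀ x, pN (iN x) = x := by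
      intro x
      apply Subtype.ext
      show (fun j => Ψ (Φ (x.1 j))) + p2 0 = x.1
      rw [hp20, add_zero]
      exact funext fun j => hΨΦ _
    have hNR : IsFP R (LinearMap.ker eQ) n :=
      ih Φ Ψ hΨΦ (LinearMap.ker eQ) (LinearMap.ker e'') iN pN hiaN hisN hpaN hpsN hpiN hK''
    exact isFP_assemble eQ hsQ hNR

end Main


section Glue
universe u v w

theorem leftFP_retract {K : Type w} [CommRing K] {R : Type (max w u)} {S : Type (max w v)}
    [Ring R] [Ring S] (εR : R →+* K) (εS : S →+* K)
    (Φ : R →+* S) (Ψ : S →+* R) (hΨΦ : ∀ x, Ψ (Φ x) = x)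
    (hΦε : ∀ x, εS (Φ x) = εR x) (hΨε : ∀ y, εR (Ψ y) = εS y)
    (n : ℕ) (h : LeftFP S εS n) : LeftFP R εR n := by
  letI : Module R K := Module.compHom K εR
  letI : Module S K := Module.compHom K εS
  have h' : IsFP S K n := h
  have h'' : IsFP S (ULift.{v} K) n := isFP_congr (ULift.moduleEquiv (R := S) (M := K)).symm h'
  show IsFP R K n
  refine isFP_congr (ULift.moduleEquiv (R := R) (M := K))
    (isFP_retract n Φ Ψ hΨΦ (ULift.{u} K) (ULift.{v} K)
      (fun x => ⟨x.down⟩) (fun y => ⟨y.down⟩) (fun x y => rfl) ?_ (fun x y => rfl) ?_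
      (fun x => rfl) h'')
  · intro c x
    apply ULift.ext
    show εR c * x.down = εS (Φ c) * x.down
    rw [hΦε]
  · intro c y
    apply ULift.ext
    show εS c * y.down = εR (Ψ c) * y.down
    rw [hΨε]

end Glue

section MonAlg
variable (K : Type*) [CommRing K] {B C : Type*} [Monoid B] [Monoid C]

theorem aug_mapDomain (f : C →* B) (x : MonoidAlgebra K C) :
    aug K B (MonoidAlgebra.mapDomain f x) = aug K C x := by
  induction x using MonoidAlgebra.induction_linear with
  | zero => simp
  | add a b ha hb => rw [MonoidAlgebra.mapDomain_add, map_add, map_add, ha, hb]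
  | single a b =>
    rw [MonoidAlgebra.mapDomain_single]
    show aug K B (MonoidAlgebra.single (f a) b) = aug K C (MonoidAlgebra.single a b)
    simp [aug, MonoidAlgebra.lift_single]

end MonAlg

/-- If the monoid `C` is a retract of the monoid `B` (via `ψ : B →* C`,
`φ : C →* B` with `ψ ∘ φ = id`), then left-`FP n` and right-`FP n` over `K` pass from `B`
to `C`. -/
theorem monoid_retract_leftFP_rightFP
    (K : Type*) [CommRing K] (B C : Type*) [Monoid B] [Monoid C] (n : ℕ)
    (ψ : B →* C) (φ : C →* B) (hψφ : ψ.comp φ = MonoidHom.id C) :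
    (LeftFP (MonoidAlgebra K B) (aug K B).toRingHom n →
      LeftFP (MonoidAlgebra K C) (aug K C).toRingHom n) ∧
    (RightFP (MonoidAlgebra K B) (aug K B).toRingHom n →
      RightFP (MonoidAlgebra K C) (aug K C).toRingHom n) := by
  have hψφc : ∀ c : C, ψ (φ c) = c := fun c => DFunLike.congr_fun hψφ c
  have hmap : ∀ x, MonoidAlgebra.mapDomainRingHom K ψ (MonoidAlgebra.mapDomainRingHom K φ x)
      = x := by
    intro x
    rw [← RingHom.comp_apply, ← MonoidAlgebra.mapDomainRingHom_comp, hψφ,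
      MonoidAlgebra.mapDomainRingHom_id, RingHom.id_apply]
  have haugφ : ∀ x, (aug K B).toRingHom (MonoidAlgebra.mapDomainRingHom K φ x)
      = (aug K C).toRingHom x := fun x => aug_mapDomain K φ x
  have haugψ : ∀ y, (aug K C).toRingHom (MonoidAlgebra.mapDomainRingHom K ψ y)
      = (aug K B).toRingHom y := fun y => aug_mapDomain K ψ y
  constructor
  · exact fun h => leftFP_retract _ _ (MonoidAlgebra.mapDomainRingHom K φ)
      (MonoidAlgebra.mapDomainRingHom K ψ) hmap haugφ haugψ n h
  · intro h
    show LeftFP _ _ n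
    exact leftFP_retract _ _ (RingHom.op (MonoidAlgebra.mapDomainRingHom K φ))
      (RingHom.op (MonoidAlgebra.mapDomainRingHom K ψ))
      (fun x => by
        show op (MonoidAlgebra.mapDomainRingHom K ψ
          (MonoidAlgebra.mapDomainRingHom K φ x.unop)) = x
        rw [hmap]
        exact op_unop x)
      (fun x => haugφ x.unop) (fun y => haugψ y.unop) n h
end

section
/- Let K be a commutative ring and n ≥ 0. Suppose the monoid C is a retract of the monoid B. If B is of type bi-FP_n over K, then C is of type bi-FP_n over K. -/
open Function LinearMap TensorProduct MulOpposite

set_option synthInstance.maxHeartbeats 400000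

section AbstractFP

universe u v w

variable {R : Type v} [Ring R]

/-- The `R`-linear map `(Fin m → R) → M` sending the canonical basis vector `i` to `u i`. -/
noncomputable def covMap {M : Type*} [AddCommGroup M] [Module R M] {m : ℕ}
    (u : Fin m → M) : (Fin m → R) →ₗ[R] M where
  toFun x := ∑ i, x i • u i
  map_add' x y := by simp [add_smul, Finset.sum_add_distrib]
  map_smul' r x := by simp [mul_smul, Finset.smul_sum]

@[simp] lemma covMap_apply {M : Type*} [AddCommGroup M] [Module R M] {m : ℕ}
    (u : Fin m → M) (x : Fin m → R) : covMap u x = ∑ i, x i • u i := rfl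

lemma single_smul_one {m : ℕ} (i : Fin m) (c : R) :
    c • (Pi.single i (1 : R) : Fin m → R) = Pi.single i c := by
  ext j
  rcases eq_or_ne j i with h | h
  · subst h; simp
  · simp [Pi.single_eq_of_ne h]

lemma pi_apply_eq_sum {M : Type*} [AddCommGroup M] [Module R M] {m : ℕ}
    (f : (Fin m → R) →ₗ[R] M) (x : Fin m → R) :
    f x = ∑ i, x i • f (Pi.single i 1) := by
  conv_lhs => rw [← Finset.univ_sum_single x]
  rw [map_sum]
  refine Finset.sum_congr rfl fun i _ => ?_
  rw [← f.map_smul, single_smul_one]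

lemma exists_lift {M G : Type*} [AddCommGroup M] [Module R M] [AddCommGroup G] [Module R G]
    {m : ℕ} (p : (Fin m → R) →ₗ[R] M) (q : G →ₗ[R] M) (hq : Function.Surjective q) :
    ∃ h : (Fin m → R) →ₗ[R] G, ∀ x, q (h x) = p x := by
  choose s hs using hq
  refine ⟨covMap (fun i => s (p (Pi.single i 1))), fun x => ?_⟩
  rw [covMap_apply, map_sum, pi_apply_eq_sum p x]
  exact Finset.sum_congr rfl fun i _ => by rw [map_smul, hs]

section Schanuel

variable {M F G : Type*} [AddCommGroup M] [Module R M] [AddCommGroup F] [Module R F]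
  [AddCommGroup G] [Module R G]

/-- The pullback of two maps to `M`, as a kernel. -/
noncomputable def pb (p : F →ₗ[R] M) (q : G →ₗ[R] M) : Submodule R (F × G) :=
  LinearMap.ker (p ∘ₗ LinearMap.fst R F G - q ∘ₗ LinearMap.snd R F G)

lemma mem_pb {p : F →ₗ[R] M} {q : G →ₗ[R] M} (x : F × G) :
    x ∈ pb p q ↔ p x.1 = q x.2 := by
  simp [pb, LinearMap.mem_ker, sub_eq_zero]

/-- If `q ∘ h = p`, then `ker q × F` is isomorphic to the pullback of `p` and `q`. -/
noncomputable def kerPlusFreeEquiv (p : F →ₗ[R] M) (q : G →ₗ[R] M)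
    (h : F →ₗ[R] G) (hh : ∀ x, q (h x) = p x) :
    (↥(LinearMap.ker q) × F) ≃ₗ[R] ↥(pb p q) := by
  refine LinearEquiv.ofLinear
    (LinearMap.codRestrict (pb p q)
      ((LinearMap.snd R _ F).prod
        (h ∘ₗ LinearMap.snd R _ F + (LinearMap.ker q).subtype ∘ₗ LinearMap.fst R _ F))
      (fun x => ?_))
    (LinearMap.prod
      (LinearMap.codRestrict (LinearMap.ker q)
        ((LinearMap.snd R F G ∘ₗ (pb p q).subtype) - h ∘ₗ (LinearMap.fst R F G ∘ₗ (pb p q).subtype))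
        (fun y => ?_))
      (LinearMap.fst R F G ∘ₗ (pb p q).subtype))
    ?_ ?_
  · rcases x with ⟨⟨k, hk⟩, f⟩
    simp [mem_pb, hh, map_add, LinearMap.mem_ker.mp hk]
  · have hy := (mem_pb _).mp y.2
    simp [LinearMap.mem_ker, map_sub, hh, hy]
  · apply LinearMap.ext
    rintro ⟨⟨f, g⟩, hfg⟩
    apply Subtype.ext
    simp [Prod.ext_iff]
    exact add_sub_cancel (h f) g
  · apply LinearMap.ext
    rintro ⟨⟨k, hk⟩, f⟩
    simp [Prod.ext_iff, Subtype.ext_iff]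
    exact add_sub_cancel_left (h f) k

lemma schanuel {a b : ℕ} (p : (Fin a → R) →ₗ[R] M) (q : (Fin b → R) →ₗ[R] M)
    (hp : Function.Surjective p) (hq : Function.Surjective q) :
    Nonempty ((↥(LinearMap.ker p) × (Fin b → R)) ≃ₗ[R] (↥(LinearMap.ker q) × (Fin a → R))) := by
  obtain ⟨h, hh⟩ := exists_lift p q hq
  obtain ⟨h', hh'⟩ := exists_lift q p hp
  have swap : ↥(pb q p) ≃ₗ[R] ↥(pb p q) := by
    refine LinearEquiv.ofLinear
      (LinearMap.codRestrict _ ((LinearMap.snd R _ _).prod (LinearMap.fst R _ _) ∘ₗ (pb q p).subtype)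
        (fun x => by rw [mem_pb]; exact ((mem_pb _).mp x.2).symm))
      (LinearMap.codRestrict _ ((LinearMap.snd R _ _).prod (LinearMap.fst R _ _) ∘ₗ (pb p q).subtype)
        (fun x => by rw [mem_pb]; exact ((mem_pb _).mp x.2).symm))
      (by apply LinearMap.ext; rintro ⟨⟨f, g⟩, hfg⟩; apply Subtype.ext; simp)
      (by apply LinearMap.ext; rintro ⟨⟨f, g⟩, hfg⟩; apply Subtype.ext; simp)
  exact ⟨(kerPlusFreeEquiv q p h' hh').trans ((swap.trans (kerPlusFreeEquiv p q h hh).symm))⟩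

end Schanuel

end AbstractFP

section FPLemmas

universe v

variable {R : Type v} [Ring R]

lemma isFP_of_le {M : Type*} [AddCommGroup M] [Module R M] {m n : ℕ} (h : m ≤ n)
    (hM : IsFP R M n) : IsFP R M m := by
  obtain ⟨r, d, e, hs, h0, hi⟩ := hM
  exact ⟨r, d, e, hs, fun h' => h0 (h'.trans_le h), fun i hi' => hi i (hi'.trans_le h)⟩

lemma isFP_of_equiv {M N : Type*} [AddCommGroup M] [Module R M] [AddCommGroup N] [Module R N]
    (φ : M ≃ₗ[R] N) {n : ℕ} (hM : IsFP R M n) : IsFP R N n := by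
  obtain ⟨r, d, e, hs, h0, hi⟩ := hM
  refine ⟨r, d, φ.toLinearMap ∘ₗ e, φ.surjective.comp hs, fun hn => ?_, hi⟩
  rw [← h0 hn, LinearMap.ker_comp]
  simp

lemma isFP_succ_of_ker {N : Type*} [AddCommGroup N] [Module R N] {m n : ℕ}
    (q : (Fin m → R) →ₗ[R] N) (hq : Function.Surjective q)
    (h : IsFP R ↥(LinearMap.ker q) n) : IsFP R N (n + 1) := by
  obtain ⟨r, d, e, hs, h0, hi⟩ := h
  let r' : ℕ → ℕ := fun i => Nat.rec m (fun k _ => r k) i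
  refine ⟨r', fun i =>
    Nat.rec (motive := fun i => (Fin (r' (i + 1)) → R) →ₗ[R] (Fin (r' i) → R))
      ((LinearMap.ker q).subtype ∘ₗ e) (fun k _ => d k) i, q, hq, ?_, ?_⟩
  · intro _
    show LinearMap.ker q = LinearMap.range ((LinearMap.ker q).subtype ∘ₗ e)
    rw [LinearMap.range_comp, LinearMap.range_eq_top.mpr hs, Submodule.map_subtype_top]
  · intro i hi1
    match i with
    | 0 =>
      show LinearMap.ker ((LinearMap.ker q).subtype ∘ₗ e) = LinearMap.range (d 0)
      rw [LinearMap.ker_comp, Submodule.ker_subtype, ← h0 (by omega)]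
      rfl
    | (k + 1) =>
      exact hi k (by omega)

/-- Splitting `Fin (a + b) → R` as a product. -/
noncomputable def finSplitEquiv (a b : ℕ) :
    (Fin (a + b) → R) ≃ₗ[R] (Fin a → R) × (Fin b → R) :=
  (LinearEquiv.funCongrLeft R R finSumFinEquiv).trans
    (LinearEquiv.sumArrowLequivProdArrow _ _ R R)

lemma isFP_prod_free {M : Type*} [AddCommGroup M] [Module R M] {n : ℕ} (k : ℕ)
    (h : IsFP R M n) : IsFP R (M × (Fin k → R)) n := by
  obtain ⟨r, d, e, hs, h0, hi⟩ := h
  let E := finSplitEquiv (R := R) (r 0) k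
  let e'' : (Fin (r 0 + k) → R) →ₗ[R] M × (Fin k → R) :=
    (e.prodMap LinearMap.id) ∘ₗ E.toLinearMap
  let d0 : (Fin (r 1) → R) →ₗ[R] (Fin (r 0 + k) → R) :=
    E.symm.toLinearMap ∘ₗ ((d 0).prod 0)
  let r' : ℕ → ℕ := fun i => Nat.rec (r 0 + k) (fun j _ => r (j + 1)) i
  have hker : LinearMap.ker (e.prodMap (LinearMap.id (M := Fin k → R)))
      = LinearMap.range ((d 0).prod 0) → LinearMap.ker e'' = LinearMap.range d0 := by
    intro hh
    show LinearMap.ker ((e.prodMap LinearMap.id) ∘ₗ E.toLinearMap) = _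
    rw [LinearMap.ker_comp, LinearMap.range_comp]
    rw [hh, Submodule.comap_equiv_eq_map_symm]
  refine ⟨r', fun i =>
    Nat.rec (motive := fun i => (Fin (r' (i + 1)) → R) →ₗ[R] (Fin (r' i) → R))
      d0 (fun j _ => d (j + 1)) i, e'', ?_, ?_, ?_⟩
  · exact (hs.prodMap Function.surjective_id).comp E.surjective
  · intro hn
    apply hker
    rw [LinearMap.ker_prodMap]
    have h1 : LinearMap.range ((d 0).prod (0 : _ →ₗ[R] Fin k → R))
        = (LinearMap.range (d 0)).prod ⊥ := by
      ext ⟨x, y⟩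
      simp only [LinearMap.mem_range, Submodule.mem_prod, Submodule.mem_bot,
        LinearMap.prod_apply, Function.prod, LinearMap.zero_apply, Prod.mk.injEq]
      constructor
      · rintro ⟨z, hz1, hz2⟩
        exact ⟨⟨z, hz1⟩, hz2.symm⟩
      · rintro ⟨⟨z, hz⟩, rfl⟩
        exact ⟨z, hz, rfl⟩
    rw [h1, ← h0 (by omega)]
    simp [LinearMap.ker_id]
  · intro i hi1
    match i with
    | 0 =>
      show LinearMap.ker d0 = LinearMap.range (d 1)
      have : LinearMap.ker d0 = LinearMap.ker ((d 0).prod (0 : _ →ₗ[R] Fin k → R)) := by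
        show LinearMap.ker (E.symm.toLinearMap ∘ₗ _) = _
        rw [LinearMap.ker_comp]
        simp
      rw [this, LinearMap.ker_prod, ← hi 0 (by omega)]
      simp
    | (j + 1) =>
      exact hi (j + 1) (by omega)

noncomputable def kerCompEquiv {M N P : Type*} [AddCommGroup M] [Module R M]
    [AddCommGroup N] [Module R N] [AddCommGroup P] [Module R P]
    (E : M ≃ₗ[R] N) (f : N →ₗ[R] P) :
    ↥(LinearMap.ker (f ∘ₗ E.toLinearMap)) ≃ₗ[R] ↥(LinearMap.ker f) := by
  refine LinearEquiv.ofLinear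
    (LinearMap.codRestrict _ (E.toLinearMap ∘ₗ (LinearMap.ker (f ∘ₗ E.toLinearMap)).subtype)
      (fun x => by
        have hx := LinearMap.mem_ker.mp x.2
        simp only [LinearMap.comp_apply] at hx
        simpa [LinearMap.mem_ker] using hx))
    (LinearMap.codRestrict _ (E.symm.toLinearMap ∘ₗ (LinearMap.ker f).subtype)
      (fun y => by
        have hy := LinearMap.mem_ker.mp y.2
        simp [LinearMap.mem_ker, hy]))
    (by apply LinearMap.ext; rintro ⟨y, hy⟩; apply Subtype.ext; simp; exact E.apply_symm_apply y)
    (by apply LinearMap.ext; rintro ⟨x, hx⟩; apply Subtype.ext; simp; exact E.symm_apply_apply x)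

noncomputable def kerProdMapIdEquiv {H M F : Type*} [AddCommGroup H] [Module R H]
    [AddCommGroup M] [Module R M] [AddCommGroup F] [Module R F] (c : H →ₗ[R] M) :
    ↥(LinearMap.ker (c.prodMap (LinearMap.id (M := F)))) ≃ₗ[R] ↥(LinearMap.ker c) := by
  refine LinearEquiv.ofLinear
    (LinearMap.codRestrict _ (LinearMap.fst R H F ∘ₗ (LinearMap.ker _).subtype)
      (fun x => ?_))
    (LinearMap.codRestrict _ ((LinearMap.ker c).subtype.prod 0 : _ →ₗ[R] H × F)
      (fun y => ?_))
    (by apply LinearMap.ext; rintro ⟨y, hy⟩; apply Subtype.ext; simp)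
    ?_
  · have hx := LinearMap.mem_ker.mp x.2
    rw [LinearMap.prodMap_apply, Prod.ext_iff] at hx
    simpa [LinearMap.mem_ker] using hx.1
  · have hy := LinearMap.mem_ker.mp y.2
    simp [LinearMap.mem_ker, Prod.ext_iff, hy]
  · apply LinearMap.ext
    rintro ⟨⟨x1, x2⟩, hx⟩
    have hx' := LinearMap.mem_ker.mp hx
    rw [LinearMap.prodMap_apply, Prod.ext_iff] at hx'
    apply Subtype.ext
    simp only [LinearMap.comp_apply, LinearMap.codRestrict_apply, LinearMap.prod_apply,
      Pi.prod, Submodule.subtype_apply, LinearMap.fst_apply, LinearMap.id_apply,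
      LinearMap.zero_apply, LinearMap.id_coe, id_eq]
    exact Prod.ext rfl (by simpa using hx'.2.symm)

lemma isFP_ker_prod_aux {M : Type v} [AddCommGroup M] [Module R M] {n : ℕ}
    (hM : IsFP R M (n + 1)) {m : ℕ} (f : (Fin m → R) →ₗ[R] M) (hf : Function.Surjective f) :
    ∃ a : ℕ, IsFP R (↥(LinearMap.ker f) × (Fin a → R)) n := by
  obtain ⟨r, d, e, hs, h0, hi⟩ := hM
  have h0' := h0 (by omega)
  have hke : IsFP R ↥(LinearMap.ker e) n := by
    refine ⟨fun i => r (i + 1), fun i => d (i + 1),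
      LinearMap.codRestrict _ (d 0) (fun x => by rw [h0']; exact ⟨x, rfl⟩), ?_, ?_, ?_⟩
    · rintro ⟨y, hy⟩
      rw [h0'] at hy
      obtain ⟨x, hx⟩ := hy
      exact ⟨x, Subtype.ext hx⟩
    · intro hn
      rw [LinearMap.ker_codRestrict]
      exact hi 0 (by omega)
    · intro i hi1
      exact hi (i + 1) (by omega)
  have hprod : IsFP R (↥(LinearMap.ker e) × (Fin m → R)) n := isFP_prod_free m hke
  obtain ⟨Eq⟩ := schanuel e f hs hf
  exact ⟨r 0, isFP_of_equiv Eq hprod⟩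

/-- Kernel lemma: if `M` admits a finite free resolution of length `n + 1`, then the kernel of
any surjection from a finitely generated free module onto `M` admits one of length `n`. -/
lemma isFP_ker_of_surj : ∀ (n : ℕ) {M : Type v} [AddCommGroup M] [Module R M],
    IsFP R M (n + 1) → ∀ {m : ℕ} (f : (Fin m → R) →ₗ[R] M), Function.Surjective f →
    IsFP R ↥(LinearMap.ker f) n := by
  intro n
  induction n with
  | zero =>
    intro M _ _ hM m f hf
    obtain ⟨a, ha⟩ := isFP_ker_prod_aux hM f hf
    obtain ⟨r, d, e, hs, -, -⟩ := ha
    exact ⟨fun _ => r 0, fun _ => 0, LinearMap.fst R _ _ ∘ₗ e,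
      Prod.fst_surjective.comp hs, fun h => absurd h (by omega),
      fun i h => absurd h (by omega)⟩
  | succ k ih =>
    intro M _ _ hM m f hf
    obtain ⟨a, hW⟩ := isFP_ker_prod_aux hM f hf
    -- a finitely generated free cover of `ker f`
    obtain ⟨rw', dw, w, hws, -, -⟩ := isFP_of_le (Nat.zero_le (k + 1)) hW
    set c : (Fin (rw' 0) → R) →ₗ[R] ↥(LinearMap.ker f) := LinearMap.fst R _ _ ∘ₗ w with hc
    have hcs : Function.Surjective c := Prod.fst_surjective.comp hws
    let E := finSplitEquiv (R := R) (rw' 0) a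
    let cover₂ : (Fin (rw' 0 + a) → R) →ₗ[R] ↥(LinearMap.ker f) × (Fin a → R) :=
      (c.prodMap LinearMap.id) ∘ₗ E.toLinearMap
    have hcov₂ : Function.Surjective cover₂ :=
      (hcs.prodMap Function.surjective_id).comp E.surjective
    have hker₂ : IsFP R ↥(LinearMap.ker cover₂) k := ih hW cover₂ hcov₂
    have hkerc : IsFP R ↥(LinearMap.ker c) k :=
      isFP_of_equiv ((kerCompEquiv E (c.prodMap LinearMap.id)).trans (kerProdMapIdEquiv c)) hker₂
    exact isFP_succ_of_ker c hcs hkerc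

end FPLemmas

section Transfer

universe v w

/-- Transfer of the finiteness condition `FP_n` along a retraction of rings. -/
theorem isFP_transfer {R : Type v} {S : Type w} [Ring R] [Ring S]
    (p : R →+* S) (s : S →+* R) (hps : ∀ t, p (s t) = t) :
    ∀ (n : ℕ) (M : Type v) (N : Type w) [AddCommGroup M] [Module R M]
      [AddCommGroup N] [Module S N]
      (q : M →+ N) (j : N →+ M),
      (∀ (ρ : R) (x : M), q (ρ • x) = p ρ • q x) →
      (∀ (t : S) (y : N), j (t • y) = s t • j y) →
      (∀ y, q (j y) = y) →
      IsFP R M n → IsFP S N n := by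
  intro n
  induction n with
  | zero =>
    intro M N _ _ _ _ q j hq hj hqj hM
    obtain ⟨r, d, e, hs, -, -⟩ := hM
    refine ⟨fun _ => r 0, fun _ => 0, covMap (fun i => q (e (Pi.single i 1))), ?_,
      fun h => absurd h (by omega), fun i h => absurd h (by omega)⟩
    intro y
    obtain ⟨z, hz⟩ := hs (j y)
    refine ⟨fun i => p (z i), ?_⟩
    have key : q (e z) = ∑ i, p (z i) • q (e (Pi.single i 1)) := by
      rw [pi_apply_eq_sum e z, map_sum]
      exact Finset.sum_congr rfl fun i _ => hq _ _
    rw [covMap_apply, ← key, hz, hqj]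
  | succ n ih =>
    intro M N _ _ _ _ q j hq hj hqj hM
    obtain ⟨r, d, e, hs, h0, hi⟩ := hM
    have hM' : IsFP R M (n + 1) := ⟨r, d, e, hs, h0, hi⟩
    -- generators of M
    set g : Fin (r 0) → M := fun i => e (Pi.single i 1) with hg
    -- adapted (doubled) finitely generated free cover of M over R
    set u2 : Fin (r 0 + r 0) → M :=
      fun k2 => Fin.addCases (fun i => g i) (fun i => j (q (g i))) k2 with hu2
    set e₂ : (Fin (r 0 + r 0) → R) →ₗ[R] M := covMap u2 with he₂
    have hu2l : ∀ i, u2 (Fin.castAdd (r 0) i) = g i := fun i => by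
      rw [hu2]; exact Fin.addCases_left i
    have hu2r : ∀ i, u2 (Fin.natAdd (r 0) i) = j (q (g i)) := fun i => by
      rw [hu2]; exact Fin.addCases_right i
    have he₂s : Function.Surjective e₂ := by
      intro x
      obtain ⟨z, hz⟩ := hs x
      refine ⟨fun k2 => Fin.addCases (fun i => z i) (fun _ => 0) k2, ?_⟩
      rw [he₂, covMap_apply, Fin.sum_univ_add]
      simp only [Fin.addCases_left, Fin.addCases_right, zero_smul,
        Finset.sum_const_zero, add_zero, hu2l]
      rw [hg, ← pi_apply_eq_sum e z]
      exact hz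
    -- the corresponding finitely generated free cover of N over S
    set eN : (Fin (r 0) → S) →ₗ[S] N := covMap (fun i => q (g i)) with heN
    have heNs : Function.Surjective eN := by
      intro y
      obtain ⟨z, hz⟩ := hs (j y)
      refine ⟨fun i => p (z i), ?_⟩
      have key : q (e z) = ∑ i, p (z i) • q (g i) := by
        rw [pi_apply_eq_sum e z, map_sum]
        exact Finset.sum_congr rfl fun i _ => hq _ _
      rw [heN, covMap_apply, ← key, hz, hqj]
    -- the semilinear retraction between the covers
    set Q : (Fin (r 0 + r 0) → R) →+ (Fin (r 0) → S) := AddMonoidHom.mk'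
      (fun x i => p (x (Fin.castAdd (r 0) i)) + p (x (Fin.natAdd (r 0) i)))
      (by
        intro x y
        funext i
        simp only [Pi.add_apply, map_add]
        abel) with hQ
    have hQs : ∀ (ρ : R) (x : Fin (r 0 + r 0) → R), Q (ρ • x) = p ρ • Q x := by
      intro ρ x
      funext i
      simp only [hQ, AddMonoidHom.mk'_apply, Pi.smul_apply, smul_eq_mul, map_mul, mul_add]
    set J : (Fin (r 0) → S) →+ (Fin (r 0 + r 0) → R) := AddMonoidHom.mk'
      (fun y => fun k2 => Fin.addCases (fun _ => (0 : R)) (fun i => s (y i)) k2)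
      (by
        intro x y
        funext k2
        refine Fin.addCases (fun i => ?_) (fun i => ?_) k2
        · simp only [Fin.addCases_left, Pi.add_apply, add_zero]
        · simp only [Fin.addCases_right, Pi.add_apply, map_add]) with hJ
    have hJl : ∀ y i, J y (Fin.castAdd (r 0) i) = 0 := fun y i => by
      simp only [hJ, AddMonoidHom.mk'_apply, Fin.addCases_left]
    have hJr : ∀ y i, J y (Fin.natAdd (r 0) i) = s (y i) := fun y i => by
      simp only [hJ, AddMonoidHom.mk'_apply, Fin.addCases_right]
    have hJs : ∀ (t : S) (y : Fin (r 0) → S), J (t • y) = s t • J y := by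
      intro t y
      funext k2
      refine Fin.addCases (fun i => ?_) (fun i => ?_) k2
      · simp only [hJl, Pi.smul_apply, smul_eq_mul, mul_zero]
      · simp only [hJr, Pi.smul_apply, smul_eq_mul, map_mul]
    have hQJ : ∀ y, Q (J y) = y := by
      intro y
      funext i
      simp only [hQ, AddMonoidHom.mk'_apply, hJl, hJr, map_zero, zero_add, hps]
    -- the squares commute
    have hENQ : ∀ x2, eN (Q x2) = q (e₂ x2) := by
      intro x2
      rw [heN, he₂, covMap_apply, covMap_apply, map_sum, Fin.sum_univ_add]
      simp only [hu2l, hu2r, hq, hqj, hQ, AddMonoidHom.mk'_apply]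
      rw [← Finset.sum_add_distrib]
      exact Finset.sum_congr rfl fun i _ => by rw [add_smul]
    have hE2J : ∀ y, e₂ (J y) = j (eN y) := by
      intro y
      rw [heN, he₂, covMap_apply, covMap_apply, map_sum, Fin.sum_univ_add]
      simp only [hu2l, hu2r, hJl, hJr, zero_smul, Finset.sum_const_zero, zero_add, hj]
    -- restrict to the kernels
    have hmemQ : ∀ x : ↥(LinearMap.ker e₂), Q x.1 ∈ LinearMap.ker eN := by
      intro x
      rw [LinearMap.mem_ker, hENQ, LinearMap.mem_ker.mp x.2, map_zero]
    have hmemJ : ∀ y : ↥(LinearMap.ker eN), J y.1 ∈ LinearMap.ker e₂ := by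
      intro y
      rw [LinearMap.mem_ker, hE2J, LinearMap.mem_ker.mp y.2, map_zero]
    set qK : ↥(LinearMap.ker e₂) →+ ↥(LinearMap.ker eN) := AddMonoidHom.mk'
      (fun x => ⟨Q x.1, hmemQ x⟩)
      (by intro x y; apply Subtype.ext; simp [map_add]) with hqK
    set jK : ↥(LinearMap.ker eN) →+ ↥(LinearMap.ker e₂) := AddMonoidHom.mk'
      (fun y => ⟨J y.1, hmemJ y⟩)
      (by intro x y; apply Subtype.ext; simp [map_add]) with hjK
    have hqKs : ∀ (ρ : R) (x : ↥(LinearMap.ker e₂)), qK (ρ • x) = p ρ • qK x := by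
      intro ρ x
      apply Subtype.ext
      simp only [hqK, AddMonoidHom.mk'_apply, Submodule.coe_smul, SetLike.val_smul]
      exact hQs ρ x.1
    have hjKs : ∀ (t : S) (y : ↥(LinearMap.ker eN)), jK (t • y) = s t • jK y := by
      intro t y
      apply Subtype.ext
      simp only [hjK, AddMonoidHom.mk'_apply, Submodule.coe_smul, SetLike.val_smul]
      exact hJs t y.1
    have hqjK : ∀ y, qK (jK y) = y := by
      intro y
      apply Subtype.ext
      simp only [hqK, hjK, AddMonoidHom.mk'_apply]
      exact hQJ y.1
    have hKM : IsFP R ↥(LinearMap.ker e₂) n := isFP_ker_of_surj n hM' e₂ he₂s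
    have hKN : IsFP S ↥(LinearMap.ker eN) n :=
      ih ↥(LinearMap.ker e₂) ↥(LinearMap.ker eN) qK jK hqKs hjKs hqjK hKM
    exact isFP_succ_of_ker eN heNs hKN

end Transfer

section Bridge

variable (K A : Type*) [CommRing K] [Ring A] [Algebra K A]

/-- Right multiplication as an algebra morphism `Aᵐᵒᵖ →ₐ[K] End K A`. -/
noncomputable def rightMulAlgHom : Aᵐᵒᵖ →ₐ[K] Module.End K A where
  toFun b := LinearMap.mulRight K (unop b)
  map_one' := by ext x; simp
  map_mul' b b' := by ext x; simp [mul_assoc]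
  map_zero' := by ext x; simp
  map_add' b b' := by ext x; simp [mul_add]
  commutes' k := by
    ext x
    simp only [MulOpposite.algebraMap_apply, unop_op, LinearMap.mulRight_apply,
      Module.algebraMap_end_apply]
    rw [← Algebra.commutes, ← Algebra.smul_def]

/-- The left/right multiplication action of the enveloping algebra `A ⊗[K] Aᵐᵒᵖ` on `A`. -/
noncomputable def envAlgHom : (A ⊗[K] Aᵐᵒᵖ) →ₐ[K] Module.End K A :=
  Algebra.TensorProduct.lift (Algebra.lmul K A) (rightMulAlgHom K A)
    (fun a b => by
      show _ * _ = _ * _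
      ext x
      simp [rightMulAlgHom, mul_assoc])

/-- `A` as a module over its enveloping algebra. -/
noncomputable instance selfBimod : Module (A ⊗[K] Aᵐᵒᵖ) A :=
  Module.compHom A (envAlgHom K A).toRingHom

lemma selfBimod_smul (a b x : A) : (a ⊗ₜ[K] op b) • x = a * x * b := by
  show envAlgHom K A (a ⊗ₜ[K] op b) x = a * x * b
  rw [envAlgHom, Algebra.TensorProduct.lift_tmul]
  simp [rightMulAlgHom, mul_assoc]

lemma selfBimod_algebraMap_smul (k : K) (x : A) :
    (algebraMap K (A ⊗[K] Aᵐᵒᵖ) k) • x = k • x := by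
  rw [Algebra.TensorProduct.algebraMap_apply, ← op_one, selfBimod_smul, mul_one,
    ← Algebra.smul_def]

/-- The canonical `K`-linear identification `A ⊗[K] A ≃ A ⊗[K] Aᵐᵒᵖ`. -/
noncomputable def theta : (A ⊗[K] A) ≃ₗ[K] A ⊗[K] Aᵐᵒᵖ :=
  LinearEquiv.lTensor A (MulOpposite.opLinearEquiv K)

@[simp] lemma theta_tmul (x y : A) : theta K A (x ⊗ₜ[K] y) = x ⊗ₜ[K] op y := rfl

lemma lmulT_one : lmulT K A 1 = LinearMap.id := by
  rw [lmulT, LinearMap.mulLeft_one, LinearMap.rTensor_id]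

lemma rmulT_one : rmulT K A 1 = LinearMap.id := by
  rw [rmulT, LinearMap.mulRight_one, LinearMap.lTensor_id]

lemma theta_mul (a b : A) (z : A ⊗[K] A) :
    theta K A (lmulT K A a (rmulT K A b z)) = (a ⊗ₜ[K] op b) * theta K A z := by
  induction z using TensorProduct.induction_on with
  | zero => simp
  | tmul x y =>
    simp only [lmulT, rmulT, LinearMap.lTensor_tmul, LinearMap.rTensor_tmul,
      LinearMap.mulLeft_apply, LinearMap.mulRight_apply, theta_tmul,
      Algebra.TensorProduct.tmul_mul_tmul, ← op_mul]
  | add z1 z2 h1 h2 =>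
    simp only [map_add, mul_add, h1, h2]

end Bridge

section Bridge2

variable (K A : Type*) [CommRing K] [Ring A] [Algebra K A]

/-- Componentwise `theta`. -/
noncomputable def thetaPi (r : ℕ) : (Fin r → A ⊗[K] A) ≃ₗ[K] (Fin r → A ⊗[K] Aᵐᵒᵖ) :=
  LinearEquiv.piCongrRight (fun _ => theta K A)

@[simp] lemma thetaPi_apply (r : ℕ) (y : Fin r → A ⊗[K] A) (i : Fin r) :
    thetaPi K A r y i = theta K A (y i) := rfl

@[simp] lemma thetaPi_symm_apply (r : ℕ) (x : Fin r → A ⊗[K] Aᵐᵒᵖ) (i : Fin r) :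
    (thetaPi K A r).symm x i = (theta K A).symm (x i) := rfl

lemma thetaPi_smul (r : ℕ) (a b : A) (y : Fin r → A ⊗[K] A) :
    thetaPi K A r ((lmulT K A a).compLeft (Fin r) ((rmulT K A b).compLeft (Fin r) y))
      = (a ⊗ₜ[K] op b) • thetaPi K A r y := by
  funext i
  simp only [thetaPi_apply, LinearMap.compLeft_apply, Pi.smul_apply, smul_eq_mul]
  exact theta_mul K A a b (y i)

lemma thetaPi_symm_smul (r : ℕ) (a b : A) (x : Fin r → A ⊗[K] Aᵐᵒᵖ) :
    (thetaPi K A r).symm ((a ⊗ₜ[K] op b) • x)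
      = (lmulT K A a).compLeft (Fin r) ((rmulT K A b).compLeft (Fin r) ((thetaPi K A r).symm x)) := by
  apply (thetaPi K A r).injective
  rw [thetaPi_smul, LinearEquiv.apply_symm_apply, LinearEquiv.apply_symm_apply]

lemma compLeft_lmulT_one (r : ℕ) :
    (lmulT K A 1).compLeft (Fin r) = LinearMap.id := by
  rw [lmulT_one]
  ext y i
  simp

lemma compLeft_rmulT_one (r : ℕ) :
    (rmulT K A 1).compLeft (Fin r) = LinearMap.id := by
  rw [rmulT_one]
  ext y i
  simp

/-- Conjugating a bimodule map of free bimodules by `theta` yields a map of modules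
over the enveloping algebra. -/
noncomputable def conjMap {r' r : ℕ} (dK : (Fin r' → A ⊗[K] A) →ₗ[K] (Fin r → A ⊗[K] A))
    (hL : ∀ a : A, dK ∘ₗ (lmulT K A a).compLeft (Fin r')
        = (lmulT K A a).compLeft (Fin r) ∘ₗ dK)
    (hR : ∀ b : A, dK ∘ₗ (rmulT K A b).compLeft (Fin r')
        = (rmulT K A b).compLeft (Fin r) ∘ₗ dK) :
    (Fin r' → A ⊗[K] Aᵐᵒᵖ) →ₗ[A ⊗[K] Aᵐᵒᵖ] (Fin r → A ⊗[K] Aᵐᵒᵖ) where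
  toFun x := thetaPi K A r (dK ((thetaPi K A r').symm x))
  map_add' x y := by simp only [map_add]
  map_smul' ρ x := by
    simp only [RingHom.id_apply]
    induction ρ using TensorProduct.induction_on with
    | zero =>
      exact (congrArg (fun z => thetaPi K A r (dK ((thetaPi K A r').symm z)))
        (zero_smul (A ⊗[K] Aᵐᵒᵖ) x)).trans ((by simp only [map_zero] :
        thetaPi K A r (dK ((thetaPi K A r').symm 0)) = 0).trans
        (zero_smul (A ⊗[K] Aᵐᵒᵖ) (thetaPi K A r (dK ((thetaPi K A r').symm x)))).symm)
    | tmul a b =>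
      rw [← op_unop b, thetaPi_symm_smul]
      rw [← LinearMap.comp_apply dK, hL, LinearMap.comp_apply, ← LinearMap.comp_apply dK, hR,
        LinearMap.comp_apply, thetaPi_smul]
    | add ρ1 ρ2 h1 h2 =>
      rw [add_smul, add_smul, ← h1, ← h2, ← map_add, ← map_add, ← map_add]

@[simp] lemma conjMap_apply {r' r : ℕ} (dK : (Fin r' → A ⊗[K] A) →ₗ[K] (Fin r → A ⊗[K] A))
    (hL hR) (x : Fin r' → A ⊗[K] Aᵐᵒᵖ) :
    conjMap K A dK hL hR x = thetaPi K A r (dK ((thetaPi K A r').symm x)) := rfl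

/-- Conjugating the augmentation `e : F₀ → A` by `theta`. -/
noncomputable def conjAug {r0 : ℕ} (e : (Fin r0 → A ⊗[K] A) →ₗ[K] A)
    (hl : ∀ a : A, e ∘ₗ (lmulT K A a).compLeft (Fin r0) = LinearMap.mulLeft K a ∘ₗ e)
    (hr : ∀ b : A, e ∘ₗ (rmulT K A b).compLeft (Fin r0) = LinearMap.mulRight K b ∘ₗ e) :
    (Fin r0 → A ⊗[K] Aᵐᵒᵖ) →ₗ[A ⊗[K] Aᵐᵒᵖ] A where
  toFun x := e ((thetaPi K A r0).symm x)
  map_add' x y := by simp only [map_add]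
  map_smul' ρ x := by
    simp only [RingHom.id_apply]
    induction ρ using TensorProduct.induction_on with
    | zero =>
      exact (congrArg (fun z => e ((thetaPi K A r0).symm z))
        (zero_smul (A ⊗[K] Aᵐᵒᵖ) x)).trans ((by simp only [map_zero] :
        e ((thetaPi K A r0).symm 0) = 0).trans
        (zero_smul (A ⊗[K] Aᵐᵒᵖ) (e ((thetaPi K A r0).symm x))).symm)
    | tmul a b =>
      rw [← op_unop b, thetaPi_symm_smul]
      rw [← LinearMap.comp_apply e, hl, LinearMap.comp_apply, ← LinearMap.comp_apply e, hr,
        LinearMap.comp_apply, selfBimod_smul]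
      simp [mul_assoc]
    | add ρ1 ρ2 h1 h2 =>
      rw [add_smul, add_smul, ← h1, ← h2, ← map_add, ← map_add]

@[simp] lemma conjAug_apply {r0 : ℕ} (e : (Fin r0 → A ⊗[K] A) →ₗ[K] A) (hl hr)
    (x : Fin r0 → A ⊗[K] Aᵐᵒᵖ) :
    conjAug K A e hl hr x = e ((thetaPi K A r0).symm x) := rfl

/-- `bi-FP n` for the algebra `A` gives `FP n` for `A` over its enveloping algebra. -/
lemma isFP_of_biFP {n : ℕ} (h : BiFP K A n) : IsFP (A ⊗[K] Aᵐᵒᵖ) A n := by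
  obtain ⟨r, d, e, hdl, hdr, hel, her, hs, h0, hi⟩ := h
  refine ⟨r, fun i => conjMap K A (d i) (hdl i) (hdr i), conjAug K A e hel her, ?_, ?_, ?_⟩
  · intro y
    obtain ⟨z, hz⟩ := hs y
    exact ⟨thetaPi K A (r 0) z, by simp [hz]⟩
  · intro hn
    refine Submodule.ext fun x => ?_
    rw [LinearMap.mem_ker, LinearMap.mem_range]
    constructor
    · intro hx
      have : (thetaPi K A (r 0)).symm x ∈ LinearMap.ker e := LinearMap.mem_ker.mpr hx
      rw [h0 hn] at this
      obtain ⟨y, hy⟩ := this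
      refine ⟨thetaPi K A (r 1) y, ?_⟩
      simp [hy]
    · rintro ⟨y, rfl⟩
      have : e (d 0 ((thetaPi K A (r 1)).symm y)) = 0 := by
        have hm : d 0 ((thetaPi K A (r 1)).symm y) ∈ LinearMap.range (d 0) := ⟨_, rfl⟩
        rw [← h0 hn] at hm
        exact LinearMap.mem_ker.mp hm
      simp [this]
  · intro i hin
    refine Submodule.ext fun x => ?_
    rw [LinearMap.mem_ker, LinearMap.mem_range]
    constructor
    · intro hx
      have hx' : d i ((thetaPi K A (r (i + 1))).symm x) = 0 := by
        have := congrArg (thetaPi K A (r i)).symm hx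
        simpa using this
      have : (thetaPi K A (r (i + 1))).symm x ∈ LinearMap.ker (d i) := LinearMap.mem_ker.mpr hx'
      rw [hi i hin] at this
      obtain ⟨y, hy⟩ := this
      refine ⟨thetaPi K A (r (i + 2)) y, ?_⟩
      simp [hy]
    · rintro ⟨y, rfl⟩
      have hm : d (i + 1) ((thetaPi K A (r (i + 2))).symm y) ∈ LinearMap.range (d (i + 1)) :=
        ⟨_, rfl⟩
      rw [← hi i hin] at hm
      have := LinearMap.mem_ker.mp hm
      simp [this]

end Bridge2

section Bridge3

variable (K A : Type*) [CommRing K] [Ring A] [Algebra K A]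

lemma thetaPi_lsmul (r : ℕ) (a : A) (y : Fin r → A ⊗[K] A) :
    thetaPi K A r ((lmulT K A a).compLeft (Fin r) y) = (a ⊗ₜ[K] op (1 : A)) • thetaPi K A r y := by
  have := thetaPi_smul K A r a 1 y
  rwa [compLeft_rmulT_one, LinearMap.id_apply] at this

lemma thetaPi_rsmul (r : ℕ) (b : A) (y : Fin r → A ⊗[K] A) :
    thetaPi K A r ((rmulT K A b).compLeft (Fin r) y) = ((1 : A) ⊗ₜ[K] op b) • thetaPi K A r y := by
  have := thetaPi_smul K A r 1 b y
  rwa [compLeft_lmulT_one, LinearMap.id_apply] at this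

lemma thetaPi_symm_lsmul (r : ℕ) (a : A) (x : Fin r → A ⊗[K] Aᵐᵒᵖ) :
    (thetaPi K A r).symm ((a ⊗ₜ[K] op (1 : A)) • x)
      = (lmulT K A a).compLeft (Fin r) ((thetaPi K A r).symm x) := by
  have := thetaPi_symm_smul K A r a 1 x
  rwa [compLeft_rmulT_one, LinearMap.id_apply] at this

lemma thetaPi_symm_rsmul (r : ℕ) (b : A) (x : Fin r → A ⊗[K] Aᵐᵒᵖ) :
    (thetaPi K A r).symm (((1 : A) ⊗ₜ[K] op b) • x)
      = (rmulT K A b).compLeft (Fin r) ((thetaPi K A r).symm x) := by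
  have := thetaPi_symm_smul K A r 1 b x
  rwa [compLeft_lmulT_one, LinearMap.id_apply] at this

/-- Conjugating back: from a map over the enveloping algebra to a bimodule map. -/
noncomputable def unconjMap {r' r : ℕ}
    (D : (Fin r' → A ⊗[K] Aᵐᵒᵖ) →ₗ[A ⊗[K] Aᵐᵒᵖ] (Fin r → A ⊗[K] Aᵐᵒᵖ)) :
    (Fin r' → A ⊗[K] A) →ₗ[K] (Fin r → A ⊗[K] A) where
  toFun y := (thetaPi K A r).symm (D (thetaPi K A r' y))
  map_add' x y := by simp only [map_add]
  map_smul' k y := by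
    simp only [RingHom.id_apply, map_smul]
    rw [D.map_smul_of_tower k, map_smul]

@[simp] lemma unconjMap_apply {r' r : ℕ}
    (D : (Fin r' → A ⊗[K] Aᵐᵒᵖ) →ₗ[A ⊗[K] Aᵐᵒᵖ] (Fin r → A ⊗[K] Aᵐᵒᵖ))
    (y : Fin r' → A ⊗[K] A) :
    unconjMap K A D y = (thetaPi K A r).symm (D (thetaPi K A r' y)) := rfl

lemma unconjMap_comm_l {r' r : ℕ}
    (D : (Fin r' → A ⊗[K] Aᵐᵒᵖ) →ₗ[A ⊗[K] Aᵐᵒᵖ] (Fin r → A ⊗[K] Aᵐᵒᵖ)) (a : A) :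
    unconjMap K A D ∘ₗ (lmulT K A a).compLeft (Fin r')
      = (lmulT K A a).compLeft (Fin r) ∘ₗ unconjMap K A D := by
  refine LinearMap.ext fun y => ?_
  simp only [LinearMap.comp_apply, unconjMap_apply]
  rw [thetaPi_lsmul, map_smul, thetaPi_symm_lsmul]

lemma unconjMap_comm_r {r' r : ℕ}
    (D : (Fin r' → A ⊗[K] Aᵐᵒᵖ) →ₗ[A ⊗[K] Aᵐᵒᵖ] (Fin r → A ⊗[K] Aᵐᵒᵖ)) (b : A) :
    unconjMap K A D ∘ₗ (rmulT K A b).compLeft (Fin r')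
      = (rmulT K A b).compLeft (Fin r) ∘ₗ unconjMap K A D := by
  refine LinearMap.ext fun y => ?_
  simp only [LinearMap.comp_apply, unconjMap_apply]
  rw [thetaPi_rsmul, map_smul, thetaPi_symm_rsmul]

/-- Conjugating back the augmentation. -/
noncomputable def unconjAug {r0 : ℕ}
    (E : (Fin r0 → A ⊗[K] Aᵐᵒᵖ) →ₗ[A ⊗[K] Aᵐᵒᵖ] A) :
    (Fin r0 → A ⊗[K] A) →ₗ[K] A where
  toFun y := E (thetaPi K A r0 y)
  map_add' x y := by simp only [map_add]
  map_smul' k y := by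
    simp only [RingHom.id_apply, map_smul]
    rw [← algebraMap_smul (A ⊗[K] Aᵐᵒᵖ) k (thetaPi K A r0 y), E.map_smul,
      selfBimod_algebraMap_smul]

@[simp] lemma unconjAug_apply {r0 : ℕ}
    (E : (Fin r0 → A ⊗[K] Aᵐᵒᵖ) →ₗ[A ⊗[K] Aᵐᵒᵖ] A) (y : Fin r0 → A ⊗[K] A) :
    unconjAug K A E y = E (thetaPi K A r0 y) := rfl

lemma unconjAug_comm_l {r0 : ℕ}
    (E : (Fin r0 → A ⊗[K] Aᵐᵒᵖ) →ₗ[A ⊗[K] Aᵐᵒᵖ] A) (a : A) :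
    unconjAug K A E ∘ₗ (lmulT K A a).compLeft (Fin r0)
      = LinearMap.mulLeft K a ∘ₗ unconjAug K A E := by
  refine LinearMap.ext fun y => ?_
  simp only [LinearMap.comp_apply, unconjAug_apply, LinearMap.mulLeft_apply]
  rw [thetaPi_lsmul, map_smul, selfBimod_smul, mul_one]

lemma unconjAug_comm_r {r0 : ℕ}
    (E : (Fin r0 → A ⊗[K] Aᵐᵒᵖ) →ₗ[A ⊗[K] Aᵐᵒᵖ] A) (b : A) :
    unconjAug K A E ∘ₗ (rmulT K A b).compLeft (Fin r0)
      = LinearMap.mulRight K b ∘ₗ unconjAug K A E := by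
  refine LinearMap.ext fun y => ?_
  simp only [LinearMap.comp_apply, unconjAug_apply, LinearMap.mulRight_apply]
  rw [thetaPi_rsmul, map_smul, selfBimod_smul, one_mul]

/-- `FP n` over the enveloping algebra gives `bi-FP n`. -/
lemma biFP_of_isFP {n : ℕ} (h : IsFP (A ⊗[K] Aᵐᵒᵖ) A n) : BiFP K A n := by
  obtain ⟨r, D, E, hs, h0, hi⟩ := h
  refine ⟨r, fun i => unconjMap K A (D i), unconjAug K A E,
    fun i a => unconjMap_comm_l K A (D i) a, fun i b => unconjMap_comm_r K A (D i) b,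
    fun a => unconjAug_comm_l K A E a, fun b => unconjAug_comm_r K A E b, ?_, ?_, ?_⟩
  · intro y
    obtain ⟨z, hz⟩ := hs y
    exact ⟨(thetaPi K A (r 0)).symm z, by simp [hz]⟩
  · intro hn
    refine Submodule.ext fun y => ?_
    rw [LinearMap.mem_ker, LinearMap.mem_range]
    constructor
    · intro hy
      have : thetaPi K A (r 0) y ∈ LinearMap.ker E := LinearMap.mem_ker.mpr hy
      rw [h0 hn] at this
      obtain ⟨z, hz⟩ := this
      exact ⟨(thetaPi K A (r 1)).symm z, by simp [hz]⟩
    · rintro ⟨z, rfl⟩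
      have hm : D 0 (thetaPi K A (r 1) z) ∈ LinearMap.range (D 0) := ⟨_, rfl⟩
      rw [← h0 hn] at hm
      have := LinearMap.mem_ker.mp hm
      simp [this]
  · intro i hin
    refine Submodule.ext fun y => ?_
    rw [LinearMap.mem_ker, LinearMap.mem_range]
    constructor
    · intro hy
      have hy' : D i (thetaPi K A (r (i + 1)) y) = 0 := by
        have := congrArg (thetaPi K A (r i)) hy
        simpa using this
      have : thetaPi K A (r (i + 1)) y ∈ LinearMap.ker (D i) := LinearMap.mem_ker.mpr hy'
      rw [hi i hin] at this
      obtain ⟨z, hz⟩ := this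
      exact ⟨(thetaPi K A (r (i + 2))).symm z, by simp [hz]⟩
    · rintro ⟨z, rfl⟩
      have hm : D (i + 1) (thetaPi K A (r (i + 2)) z) ∈ LinearMap.range (D (i + 1)) := ⟨_, rfl⟩
      rw [← hi i hin] at hm
      have := LinearMap.mem_ker.mp hm
      simp [this]

end Bridge3

section Retract

variable (K : Type*) [CommRing K]

/-- An algebra morphism induces a morphism of enveloping algebras. -/
noncomputable def envHom {A1 A2 : Type*} [Ring A1] [Algebra K A1] [Ring A2] [Algebra K A2]
    (f : A1 →ₐ[K] A2) : (A1 ⊗[K] A1ᵐᵒᵖ) →ₐ[K] (A2 ⊗[K] A2ᵐᵒᵖ) :=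
  Algebra.TensorProduct.map f (AlgHom.op f)

@[simp] lemma envHom_tmul {A1 A2 : Type*} [Ring A1] [Algebra K A1] [Ring A2] [Algebra K A2]
    (f : A1 →ₐ[K] A2) (a b : A1) :
    envHom K f (a ⊗ₜ[K] op b) = f a ⊗ₜ[K] op (f b) :=
  Algebra.TensorProduct.map_tmul _ _ _ _

lemma algHom_env_smul {A1 A2 : Type*} [Ring A1] [Algebra K A1] [Ring A2] [Algebra K A2]
    (f : A1 →ₐ[K] A2) (ρ : A1 ⊗[K] A1ᵐᵒᵖ) (x : A1) :
    f (ρ • x) = (envHom K f ρ) • f x := by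
  induction ρ using TensorProduct.induction_on with
  | zero =>
    simp only [map_zero]
    exact (congrArg f (zero_smul (A1 ⊗[K] A1ᵐᵒᵖ) x)).trans ((map_zero f).trans (zero_smul (A2 ⊗[K] A2ᵐᵒᵖ) (f x)).symm)
  | tmul a b =>
    rw [← op_unop b, selfBimod_smul, envHom_tmul, selfBimod_smul, map_mul, map_mul]
  | add ρ1 ρ2 h1 h2 =>
    rw [add_smul, map_add, h1, h2, map_add, add_smul]

end Retract

/-- If the monoid `C` is a retract of the monoid `B` and `B` is of type
bi-`FP n` over `K`, then `C` is of type bi-`FP n` over `K`. -/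
theorem monoid_retract_biFP
    (K : Type*) [CommRing K] (B C : Type*) [Monoid B] [Monoid C] (n : ℕ)
    (ψ : B →* C) (φ : C →* B) (hψφ : ψ.comp φ = MonoidHom.id C)
    (h : BiFP K (MonoidAlgebra K B) n) :
    BiFP K (MonoidAlgebra K C) n := by
  classical
  set πa : MonoidAlgebra K B →ₐ[K] MonoidAlgebra K C :=
    MonoidAlgebra.mapDomainAlgHom K K ψ with hπa
  set σa : MonoidAlgebra K C →ₐ[K] MonoidAlgebra K B :=
    MonoidAlgebra.mapDomainAlgHom K K φ with hσa
  have hps0 : ∀ x, πa (σa x) = x := by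
    intro x
    have hcomp : πa.comp σa = AlgHom.id K (MonoidAlgebra K C) := by
      rw [hπa, hσa, ← MonoidAlgebra.mapDomainAlgHom_comp, hψφ,
        MonoidAlgebra.mapDomainAlgHom_id]
    calc πa (σa x) = (πa.comp σa) x := rfl
    _ = x := by rw [hcomp]; rfl
  set p := envHom K πa with hp
  set s := envHom K σa with hs'
  have hps : ∀ t, p (s t) = t := by
    intro t
    induction t using TensorProduct.induction_on with
    | zero => simp only [map_zero]
    | tmul a b =>
      rw [← op_unop b, hp, hs', envHom_tmul, envHom_tmul, hps0]
      rw [hps0]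
    | add t1 t2 h1 h2 => rw [map_add, map_add, h1, h2]
  have h1 : IsFP (MonoidAlgebra K B ⊗[K] (MonoidAlgebra K B)ᵐᵒᵖ) (MonoidAlgebra K B) n :=
    isFP_of_biFP K (MonoidAlgebra K B) h
  have h2 : IsFP (MonoidAlgebra K C ⊗[K] (MonoidAlgebra K C)ᵐᵒᵖ) (MonoidAlgebra K C) n := by
    refine isFP_transfer p.toRingHom s.toRingHom hps n (MonoidAlgebra K B) (MonoidAlgebra K C)
      (AddMonoidHom.mk' (fun x => πa x) (map_add πa))
      (AddMonoidHom.mk' (fun y => σa y) (map_add σa))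
      ?_ ?_ ?_ h1
    · intro ρ x
      exact algHom_env_smul K πa ρ x
    · intro t y
      exact algHom_env_smul K σa t y
    · intro y
      exact hps0 y
  exact biFP_of_isFP K (MonoidAlgebra K C) h2
end

section
/- Let K be a commutative ring and n ≥ 0. Let A and D be K-algebras such that D is a retract of A, i.e. there are K-algebra homomorphisms κ: A → D and θ: D → A with κ ∘ θ = id_D. If A is of type bi-FP_n, then D is of type bi-FP_n. -/
open Function LinearMap TensorProduct MulOpposite

namespace RetractAux

variable {K : Type*} [CommRing K]

section CompLeft

variable {M N P : Type*} [AddCommGroup M] [AddCommGroup N] [AddCommGroup P]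
  [Module K M] [Module K N] [Module K P]

theorem compLeft_comp (f : N →ₗ[K] P) (g : M →ₗ[K] N) (I : Type*) :
    (f ∘ₗ g).compLeft I = f.compLeft I ∘ₗ g.compLeft I := rfl

theorem compLeft_id (I : Type*) :
    (LinearMap.id : M →ₗ[K] M).compLeft I = LinearMap.id := rfl

theorem compLeft_single {I : Type*} [DecidableEq I] (f : M →ₗ[K] N) (j : I) (v : M) :
    f.compLeft I (Pi.single j v) = Pi.single j (f v) := by
  funext i
  by_cases h : i = j
  · subst h; simp [LinearMap.compLeft_apply]
  · simp [LinearMap.compLeft_apply, Pi.single_eq_of_ne h]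

theorem compLeft_add (f g : M →ₗ[K] N) (I : Type*) :
    (f + g).compLeft I = f.compLeft I + g.compLeft I := by
  ext x i; simp

theorem compLeft_smul (c : K) (f : M →ₗ[K] N) (I : Type*) :
    (c • f).compLeft I = c • f.compLeft I := by
  ext x i; simp

end CompLeft

section Generic

variable {B C : Type*} [Ring B] [Algebra K B] [Ring C] [Algebra K C]

theorem lmulT_tmul (a x y : B) : lmulT K B a (x ⊗ₜ[K] y) = (a * x) ⊗ₜ[K] y := rfl

theorem rmulT_tmul (b x y : B) : rmulT K B b (x ⊗ₜ[K] y) = x ⊗ₜ[K] (y * b) := rfl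

theorem lmulT_mul (a b : B) : lmulT K B (a * b) = lmulT K B a ∘ₗ lmulT K B b := by
  apply TensorProduct.ext'; intro x y
  simp [lmulT_tmul, mul_assoc]

theorem rmulT_mul (a b : B) : rmulT K B (a * b) = rmulT K B b ∘ₗ rmulT K B a := by
  apply TensorProduct.ext'; intro x y
  simp [rmulT_tmul, mul_assoc]

theorem lmulT_comm_rmulT (a b : B) :
    lmulT K B a ∘ₗ rmulT K B b = rmulT K B b ∘ₗ lmulT K B a := by
  apply TensorProduct.ext'; intro x y
  simp [lmulT_tmul, rmulT_tmul]

theorem lmulT_add (a b : B) : lmulT K B (a + b) = lmulT K B a + lmulT K B b := by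
  apply TensorProduct.ext'; intro x y
  simp [lmulT_tmul, add_mul, add_tmul]

theorem lmulT_smul (c : K) (a : B) : lmulT K B (c • a) = c • lmulT K B a := by
  apply TensorProduct.ext'; intro x y
  simp [lmulT_tmul, smul_mul_assoc, smul_tmul']

theorem rmulT_add (a b : B) : rmulT K B (a + b) = rmulT K B a + rmulT K B b := by
  apply TensorProduct.ext'; intro x y
  simp [rmulT_tmul, mul_add, tmul_add]

theorem rmulT_smul (c : K) (a : B) : rmulT K B (c • a) = c • rmulT K B a := by
  apply TensorProduct.ext'; intro x y
  simp [rmulT_tmul, mul_smul_comm, tmul_smul]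

/-- Extensionality for maps out of a finite free bimodule. -/
theorem ext_fin {c : ℕ} {W : Type*} [AddCommGroup W] [Module K W]
    {f g : (Fin c → B ⊗[K] B) →ₗ[K] W}
    (h : ∀ (j : Fin c) (a b : B),
      f (Pi.single j (a ⊗ₜ[K] b)) = g (Pi.single j (a ⊗ₜ[K] b))) : f = g := by
  apply LinearMap.pi_ext'
  intro j
  apply TensorProduct.ext'
  intro a b
  simpa using h j a b

/-- A bimodule map out of a finite free bimodule, applied to a single pure tensor. -/
theorem map_single_tmul {c : ℕ} {X : Type*} [AddCommGroup X] [Module K X]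
    (h : (Fin c → B ⊗[K] B) →ₗ[K] X) (lX rX : B → X →ₗ[K] X)
    (hl : ∀ b, h ∘ₗ (lmulT K B b).compLeft (Fin c) = lX b ∘ₗ h)
    (hr : ∀ b, h ∘ₗ (rmulT K B b).compLeft (Fin c) = rX b ∘ₗ h)
    (j : Fin c) (x y : B) :
    h (Pi.single j (x ⊗ₜ[K] y)) = lX x (rX y (h (Pi.single j ((1:B) ⊗ₜ[K] (1:B))))) := by
  have e1 : Pi.single j (x ⊗ₜ[K] y)
      = (lmulT K B x).compLeft (Fin c)
        ((rmulT K B y).compLeft (Fin c) (Pi.single j ((1:B) ⊗ₜ[K] (1:B)))) := by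
    rw [compLeft_single, compLeft_single, rmulT_tmul, lmulT_tmul, mul_one, one_mul]
  rw [e1]
  have h1 := LinearMap.congr_fun (hl x)
    ((rmulT K B y).compLeft (Fin c) (Pi.single j ((1:B) ⊗ₜ[K] (1:B))))
  simp only [LinearMap.comp_apply] at h1
  rw [h1]
  have h2 := LinearMap.congr_fun (hr y) (Pi.single j ((1:B) ⊗ₜ[K] (1:B)))
  simp only [LinearMap.comp_apply] at h2
  rw [h2]

/-- The tensor square of an algebra hom. -/
noncomputable def tmap (f : B →ₐ[K] C) : (B ⊗[K] B) →ₗ[K] C ⊗[K] C :=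
  TensorProduct.map f.toLinearMap f.toLinearMap

theorem tmap_tmul (f : B →ₐ[K] C) (x y : B) : tmap f (x ⊗ₜ[K] y) = f x ⊗ₜ[K] f y := rfl

theorem tmap_comp_lmulT (f : B →ₐ[K] C) (a : B) :
    tmap f ∘ₗ lmulT K B a = lmulT K C (f a) ∘ₗ tmap f := by
  apply TensorProduct.ext'; intro x y
  simp [tmap_tmul, lmulT_tmul, map_mul]

theorem tmap_comp_rmulT (f : B →ₐ[K] C) (b : B) :
    tmap f ∘ₗ rmulT K B b = rmulT K C (f b) ∘ₗ tmap f := by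
  apply TensorProduct.ext'; intro x y
  simp [tmap_tmul, rmulT_tmul, map_mul]

/-- The map `a ⊗ b ↦ (l a) ((r b) m)` for a fixed element `m`. -/
noncomputable def actOn {X : Type*} [AddCommGroup X] [Module K X]
    (lX rX : B →ₗ[K] X →ₗ[K] X) (m : X) : (B ⊗[K] B) →ₗ[K] X :=
  TensorProduct.lift (LinearMap.mk₂ K (fun a b => lX a (rX b m))
    (by intros; simp) (by intros; simp) (by intros; simp) (by intros; simp))

theorem actOn_tmul {X : Type*} [AddCommGroup X] [Module K X]
    (lX rX : B →ₗ[K] X →ₗ[K] X) (m : X) (a b : B) :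
    actOn lX rX m (a ⊗ₜ[K] b) = lX a (rX b m) := by
  simp [actOn]

theorem actOn_comp_lmulT {X : Type*} [AddCommGroup X] [Module K X]
    (lX rX : B →ₗ[K] X →ₗ[K] X) (m : X)
    (hmul : ∀ a b : B, lX (a * b) = lX a ∘ₗ lX b) (a : B) :
    actOn lX rX m ∘ₗ lmulT K B a = lX a ∘ₗ actOn lX rX m := by
  apply TensorProduct.ext'; intro x y
  simp [lmulT_tmul, actOn_tmul, hmul a x]

theorem actOn_comp_rmulT {X : Type*} [AddCommGroup X] [Module K X]
    (lX rX : B →ₗ[K] X →ₗ[K] X) (m : X)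
    (hmul : ∀ a b : B, rX (a * b) = rX b ∘ₗ rX a)
    (hcomm : ∀ a b : B, lX a ∘ₗ rX b = rX b ∘ₗ lX a) (b : B) :
    actOn lX rX m ∘ₗ rmulT K B b = rX b ∘ₗ actOn lX rX m := by
  apply TensorProduct.ext'; intro x y
  have h1 : rX (y * b) m = rX b (rX y m) := by rw [hmul y b]; rfl
  have h2 := LinearMap.congr_fun (hcomm x b) (rX y m)
  simp only [LinearMap.comp_apply] at h2
  simp [rmulT_tmul, actOn_tmul, h1, h2]

/-- Bundled left action on the finite free bimodule. -/
noncomputable def LAc (c : ℕ) : B →ₗ[K] ((Fin c → B ⊗[K] B) →ₗ[K] (Fin c → B ⊗[K] B)) where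
  toFun a := (lmulT K B a).compLeft (Fin c)
  map_add' a b := by rw [lmulT_add, compLeft_add]
  map_smul' c a := by rw [lmulT_smul, compLeft_smul] <;> rfl

/-- Bundled right action on the finite free bimodule. -/
noncomputable def RAc (c : ℕ) : B →ₗ[K] ((Fin c → B ⊗[K] B) →ₗ[K] (Fin c → B ⊗[K] B)) where
  toFun b := (rmulT K B b).compLeft (Fin c)
  map_add' a b := by rw [rmulT_add, compLeft_add]
  map_smul' c a := by rw [rmulT_smul, compLeft_smul] <;> rfl

theorem LAc_apply (c : ℕ) (a : B) : LAc (K := K) c a = (lmulT K B a).compLeft (Fin c) := rfl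

theorem RAc_apply (c : ℕ) (b : B) : RAc (K := K) c b = (rmulT K B b).compLeft (Fin c) := rfl

theorem LAc_mul (c : ℕ) (a b : B) :
    LAc (K := K) c (a * b) = LAc (K := K) c a ∘ₗ LAc (K := K) c b := by
  rw [LAc_apply, LAc_apply, LAc_apply, lmulT_mul, compLeft_comp]

theorem RAc_mul (c : ℕ) (a b : B) :
    RAc (K := K) c (a * b) = RAc (K := K) c b ∘ₗ RAc (K := K) c a := by
  rw [RAc_apply, RAc_apply, RAc_apply, rmulT_mul, compLeft_comp]

theorem LAc_comm_RAc (c : ℕ) (a b : B) :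
    LAc (K := K) c a ∘ₗ RAc (K := K) c b = RAc (K := K) c b ∘ₗ LAc (K := K) c a := by
  rw [LAc_apply, RAc_apply, ← compLeft_comp, ← compLeft_comp, lmulT_comm_rmulT]

end Generic



variable {K : Type*} [CommRing K]

section Blocks

variable {M N : Type*} [AddCommGroup M] [AddCommGroup N] [Module K M] [Module K N]

/-- Appending, as a linear map. -/
noncomputable def appendL (p q : ℕ) (M : Type*) [AddCommGroup M] [Module K M] :
    ((Fin p → M) × (Fin q → M)) →ₗ[K] (Fin (p + q) → M) where
  toFun z := Fin.append z.1 z.2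
  map_add' z w := by
    funext i
    induction i using Fin.addCases with
    | left i => simp [Fin.append_left]
    | right i => simp [Fin.append_right]
  map_smul' c z := by
    funext i
    induction i using Fin.addCases with
    | left i => simp [Fin.append_left]
    | right i => simp [Fin.append_right]

/-- The block decomposition of a finite free module. -/
noncomputable def Ee (p q : ℕ) (M : Type*) [AddCommGroup M] [Module K M] :
    (Fin (p + q) → M) ≃ₗ[K] (Fin p → M) × (Fin q → M) :=
  LinearEquiv.ofLinear
    (LinearMap.prod (LinearMap.funLeft K M (Fin.castAdd q))
      (LinearMap.funLeft K M (Fin.natAdd p)))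
    (appendL p q M)
    (by
      apply LinearMap.ext
      rintro ⟨y, z⟩
      refine Prod.ext ?_ ?_
      · funext i; simp [appendL, LinearMap.funLeft, Fin.append_left]
      · funext i; simp [appendL, LinearMap.funLeft, Fin.append_right])
    (by
      apply LinearMap.ext
      intro x
      funext i
      induction i using Fin.addCases with
      | left i => simp [appendL, LinearMap.funLeft, Fin.append_left]
      | right i => simp [appendL, LinearMap.funLeft, Fin.append_right])

theorem Ee_apply_fst (p q : ℕ) (x : Fin (p + q) → M) (i : Fin p) :
    ((Ee (K := K) p q M x).1) i = x (Fin.castAdd q i) := rfl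

theorem Ee_apply_snd (p q : ℕ) (x : Fin (p + q) → M) (i : Fin q) :
    ((Ee (K := K) p q M x).2) i = x (Fin.natAdd p i) := rfl

theorem Ee_symm_apply (p q : ℕ) (y : Fin p → M) (z : Fin q → M) :
    (Ee (K := K) p q M).symm (y, z) = Fin.append y z := rfl

theorem Ee_compLeft (p q : ℕ) (f : M →ₗ[K] N) (x : Fin (p + q) → M) :
    Ee (K := K) p q N (f.compLeft (Fin (p + q)) x)
      = (f.compLeft (Fin p) ((Ee (K := K) p q M x).1),
         f.compLeft (Fin q) ((Ee (K := K) p q M x).2)) := rfl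

theorem compLeft_append (p q : ℕ) (f : M →ₗ[K] N) (y : Fin p → M) (z : Fin q → M) :
    f.compLeft (Fin (p + q)) (Fin.append y z)
      = Fin.append (f.compLeft (Fin p) y) (f.compLeft (Fin q) z) := by
  funext i
  induction i using Fin.addCases with
  | left i => simp [Fin.append_left]
  | right i => simp [Fin.append_right]

theorem Ee_symm_compLeft (p q : ℕ) (f : M →ₗ[K] N) (y : Fin p → M) (z : Fin q → M) :
    f.compLeft (Fin (p + q)) ((Ee (K := K) p q M).symm (y, z))
      = (Ee (K := K) p q N).symm (f.compLeft (Fin p) y, f.compLeft (Fin q) z) := by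
  rw [Ee_symm_apply, Ee_symm_apply, compLeft_append]

end Blocks



end RetractAux
namespace RetractAux

section Step

variable {K : Type*} [CommRing K] {A : Type*} {D : Type*}
  [Ring A] [Algebra K A] [Ring D] [Algebra K D]

set_option maxHeartbeats 1000000 in
theorem step (κ : A →ₐ[K] D) (θ : D →ₐ[K] A) (hκθ : ∀ x : D, κ (θ x) = x)
    {XA : Type*} [AddCommGroup XA] [Module K XA]
    {XD : Type*} [AddCommGroup XD] [Module K XD]
    (lA rA : A → XA →ₗ[K] XA) (lD rD : D → XD →ₗ[K] XD)
    (kh : XA →ₗ[K] XD) (th : XD →ₗ[K] XA)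
    (hkl : ∀ a, kh ∘ₗ lA a = lD (κ a) ∘ₗ kh) (hkr : ∀ b, kh ∘ₗ rA b = rD (κ b) ∘ₗ kh)
    (hthl : ∀ x, th ∘ₗ lD x = lA (θ x) ∘ₗ th) (hthr : ∀ y, th ∘ₗ rD y = rA (θ y) ∘ₗ th)
    (V : Submodule K XD) (hVret : ∀ v ∈ V, kh (th v) = v)
    {p0 p1 p2 : ℕ}
    (d0 : (Fin p1 → A ⊗[K] A) →ₗ[K] (Fin p0 → A ⊗[K] A))
    (d1 : (Fin p2 → A ⊗[K] A) →ₗ[K] (Fin p1 → A ⊗[K] A))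
    (ε : (Fin p0 → A ⊗[K] A) →ₗ[K] XA)
    (hd0l : ∀ a, d0 ∘ₗ (lmulT K A a).compLeft (Fin p1) = (lmulT K A a).compLeft (Fin p0) ∘ₗ d0)
    (hd0r : ∀ b, d0 ∘ₗ (rmulT K A b).compLeft (Fin p1) = (rmulT K A b).compLeft (Fin p0) ∘ₗ d0)
    (hd1l : ∀ a, d1 ∘ₗ (lmulT K A a).compLeft (Fin p2) = (lmulT K A a).compLeft (Fin p1) ∘ₗ d1)
    (hd1r : ∀ b, d1 ∘ₗ (rmulT K A b).compLeft (Fin p2) = (rmulT K A b).compLeft (Fin p1) ∘ₗ d1)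
    (hel : ∀ a, ε ∘ₗ (lmulT K A a).compLeft (Fin p0) = lA a ∘ₗ ε)
    (her : ∀ b, ε ∘ₗ (rmulT K A b).compLeft (Fin p0) = rA b ∘ₗ ε)
    (hUV : ∀ x, kh (ε x) ∈ V) (hVU : ∀ v ∈ V, ∃ u, ε u = th v)
    (hker0 : LinearMap.ker ε = LinearMap.range d0) :
    ∃ (εpp : (Fin (p0 + p0) → A ⊗[K] A) →ₗ[K] XA)
      (dpp0 : (Fin (p1 + p0) → A ⊗[K] A) →ₗ[K] (Fin (p0 + p0) → A ⊗[K] A))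
      (dpp1 : (Fin p2 → A ⊗[K] A) →ₗ[K] (Fin (p1 + p0) → A ⊗[K] A))
      (chi : (Fin (p0 + p0) → A ⊗[K] A) →ₗ[K] (Fin p0 → D ⊗[K] D))
      (lam : (Fin p0 → D ⊗[K] D) →ₗ[K] (Fin (p0 + p0) → A ⊗[K] A)),
      (∀ a, εpp ∘ₗ (lmulT K A a).compLeft (Fin (p0 + p0)) = lA a ∘ₗ εpp) ∧
      (∀ b, εpp ∘ₗ (rmulT K A b).compLeft (Fin (p0 + p0)) = rA b ∘ₗ εpp) ∧
      (∀ a, dpp0 ∘ₗ (lmulT K A a).compLeft (Fin (p1 + p0))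
          = (lmulT K A a).compLeft (Fin (p0 + p0)) ∘ₗ dpp0) ∧
      (∀ b, dpp0 ∘ₗ (rmulT K A b).compLeft (Fin (p1 + p0))
          = (rmulT K A b).compLeft (Fin (p0 + p0)) ∘ₗ dpp0) ∧
      (∀ a, dpp1 ∘ₗ (lmulT K A a).compLeft (Fin p2)
          = (lmulT K A a).compLeft (Fin (p1 + p0)) ∘ₗ dpp1) ∧
      (∀ b, dpp1 ∘ₗ (rmulT K A b).compLeft (Fin p2)
          = (rmulT K A b).compLeft (Fin (p1 + p0)) ∘ₗ dpp1) ∧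
      (∀ a, chi ∘ₗ (lmulT K A a).compLeft (Fin (p0 + p0))
          = (lmulT K D (κ a)).compLeft (Fin p0) ∘ₗ chi) ∧
      (∀ b, chi ∘ₗ (rmulT K A b).compLeft (Fin (p0 + p0))
          = (rmulT K D (κ b)).compLeft (Fin p0) ∘ₗ chi) ∧
      (∀ x, lam ∘ₗ (lmulT K D x).compLeft (Fin p0)
          = (lmulT K A (θ x)).compLeft (Fin (p0 + p0)) ∘ₗ lam) ∧
      (∀ y, lam ∘ₗ (rmulT K D y).compLeft (Fin p0)
          = (rmulT K A (θ y)).compLeft (Fin (p0 + p0)) ∘ₗ lam) ∧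
      ((kh ∘ₗ ε ∘ₗ (tmap θ).compLeft (Fin p0)) ∘ₗ chi = kh ∘ₗ εpp) ∧
      (εpp ∘ₗ lam = th ∘ₗ (kh ∘ₗ ε ∘ₗ (tmap θ).compLeft (Fin p0))) ∧
      (chi ∘ₗ lam = LinearMap.id) ∧
      (∀ x, kh (εpp x) ∈ V) ∧
      (∀ v ∈ V, ∃ u, εpp u = th v) ∧
      (LinearMap.ker εpp = LinearMap.range dpp0) ∧
      (LinearMap.ker d0 = LinearMap.range d1 →
        LinearMap.ker dpp0 = LinearMap.range dpp1) ∧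
      (LinearMap.ker dpp1 = LinearMap.ker d1) := by
  classical
  -- elementwise forms of hypotheses
  have hel' : ∀ (a : A) z, ε ((lmulT K A a).compLeft (Fin p0) z) = lA a (ε z) := by
    intro a z; exact LinearMap.congr_fun (hel a) z
  have her' : ∀ (b : A) z, ε ((rmulT K A b).compLeft (Fin p0) z) = rA b (ε z) := by
    intro b z; exact LinearMap.congr_fun (her b) z
  have hkl' : ∀ (a : A) m, kh (lA a m) = lD (κ a) (kh m) := by
    intro a m; exact LinearMap.congr_fun (hkl a) m
  have hkr' : ∀ (b : A) m, kh (rA b m) = rD (κ b) (kh m) := by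
    intro b m; exact LinearMap.congr_fun (hkr b) m
  have hthl' : ∀ (x : D) m, th (lD x m) = lA (θ x) (th m) := by
    intro x m; exact LinearMap.congr_fun (hthl x) m
  have hthr' : ∀ (y : D) m, th (rD y m) = rA (θ y) (th m) := by
    intro y m; exact LinearMap.congr_fun (hthr y) m
  have hd0l' : ∀ (a : A) z, d0 ((lmulT K A a).compLeft (Fin p1) z)
      = (lmulT K A a).compLeft (Fin p0) (d0 z) := by
    intro a z; exact LinearMap.congr_fun (hd0l a) z
  have hd0r' : ∀ (b : A) z, d0 ((rmulT K A b).compLeft (Fin p1) z)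
      = (rmulT K A b).compLeft (Fin p0) (d0 z) := by
    intro b z; exact LinearMap.congr_fun (hd0r b) z
  have hεd0 : ∀ z, ε (d0 z) = 0 := by
    intro z
    have : d0 z ∈ LinearMap.ker ε := by
      rw [hker0]; exact LinearMap.mem_range_self _ z
    exact this
  -- the key single-tensor formula for kh ∘ ε
  have key : ∀ (j : Fin p0) (x z : A),
      kh (ε (Pi.single j (x ⊗ₜ[K] z)))
        = lD (κ x) (rD (κ z) (kh (ε (Pi.single j ((1:A) ⊗ₜ[K] (1:A)))))) := by
    intro j x z
    have h := map_single_tmul (K := K) (B := A) (kh ∘ₗ ε)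
      (fun a => lD (κ a)) (fun b => rD (κ b))
      (fun a => by
        apply LinearMap.ext; intro z
        simp only [LinearMap.comp_apply]
        rw [hel', hkl'])
      (fun b => by
        apply LinearMap.ext; intro z
        simp only [LinearMap.comp_apply]
        rw [her', hkr'])
      j x z
    simpa using h
  -- choose preimages of the generators' images
  choose w hw using fun j : Fin p0 => hVU _ (hUV (Pi.single j ((1:A) ⊗ₜ[K] (1:A))))
  have keyw : ∀ j, kh (ε (w j)) = kh (ε (Pi.single j ((1:A) ⊗ₜ[K] (1:A)))) := by
    intro j; rw [hw j]; exact hVret _ (hUV _)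
  -- the correction map u
  set uMap : (Fin p0 → A ⊗[K] A) →ₗ[K] (Fin p0 → A ⊗[K] A) :=
    ∑ j, actOn (LAc p0) (RAc p0) (w j) ∘ₗ LinearMap.proj j with huMap
  have hu_single : ∀ (j : Fin p0) v,
      uMap (Pi.single j v) = actOn (LAc (K := K) p0) (RAc p0) (w j) v := by
    intro j v
    rw [huMap]
    rw [LinearMap.sum_apply]
    rw [Finset.sum_eq_single j]
    · simp
    · intro i _ hij
      simp [LinearMap.proj_apply, Pi.single_eq_of_ne hij]
    · simp
  have hu_tmul : ∀ (j : Fin p0) (x z : A),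
      uMap (Pi.single j (x ⊗ₜ[K] z))
        = (lmulT K A x).compLeft (Fin p0) ((rmulT K A z).compLeft (Fin p0) (w j)) := by
    intro j x z
    rw [hu_single, actOn_tmul]; rfl
  have hu_l : ∀ a, uMap ∘ₗ (lmulT K A a).compLeft (Fin p0)
      = (lmulT K A a).compLeft (Fin p0) ∘ₗ uMap := by
    intro a
    apply ext_fin (K := K) (B := A)
    intro j x z
    simp only [LinearMap.comp_apply]
    rw [compLeft_single, lmulT_tmul, hu_tmul, hu_tmul, lmulT_mul, compLeft_comp]
    simp [LinearMap.comp_apply]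
  have hu_r : ∀ b, uMap ∘ₗ (rmulT K A b).compLeft (Fin p0)
      = (rmulT K A b).compLeft (Fin p0) ∘ₗ uMap := by
    intro b
    apply ext_fin (K := K) (B := A)
    intro j x z
    simp only [LinearMap.comp_apply]
    have swap : ∀ (v : Fin p0 → A ⊗[K] A),
        (lmulT K A x).compLeft (Fin p0) ((rmulT K A b).compLeft (Fin p0) v)
          = (rmulT K A b).compLeft (Fin p0) ((lmulT K A x).compLeft (Fin p0) v) := by
      intro v
      have hc : (lmulT K A x).compLeft (Fin p0) ∘ₗ (rmulT K A b).compLeft (Fin p0)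
          = (rmulT K A b).compLeft (Fin p0) ∘ₗ (lmulT K A x).compLeft (Fin p0) := by
        rw [← compLeft_comp, ← compLeft_comp, lmulT_comm_rmulT]
      exact LinearMap.congr_fun hc v
    rw [compLeft_single, rmulT_tmul, hu_tmul, hu_tmul, rmulT_mul, compLeft_comp]
    simp only [LinearMap.comp_apply]
    rw [swap]
  have hu_l' : ∀ (a : A) z, uMap ((lmulT K A a).compLeft (Fin p0) z)
      = (lmulT K A a).compLeft (Fin p0) (uMap z) := fun a z => LinearMap.congr_fun (hu_l a) z
  have hu_r' : ∀ (b : A) z, uMap ((rmulT K A b).compLeft (Fin p0) z)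
      = (rmulT K A b).compLeft (Fin p0) (uMap z) := fun b z => LinearMap.congr_fun (hu_r b) z
  -- ε ∘ uMap on single tensors
  have hεu : ∀ (j : Fin p0) (x z : A),
      ε (uMap (Pi.single j (x ⊗ₜ[K] z))) = lA x (rA z (ε (w j))) := by
    intro j x z
    rw [hu_tmul, hel', her']
  -- the three key map identities
  have mi1 : ∀ z, kh (ε ((tmap θ).compLeft (Fin p0) ((tmap κ).compLeft (Fin p0) z)))
      = kh (ε z) := by
    intro z
    have : (kh ∘ₗ ε) ∘ₗ ((tmap θ).compLeft (Fin p0) ∘ₗ (tmap κ).compLeft (Fin p0))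
        = kh ∘ₗ ε := by
      apply ext_fin (K := K) (B := A)
      intro j x y
      simp only [LinearMap.comp_apply]
      rw [compLeft_single, tmap_tmul, compLeft_single, tmap_tmul]
      calc kh (ε (Pi.single j (θ (κ x) ⊗ₜ[K] θ (κ y))))
          = lD (κ (θ (κ x))) ((rD (κ (θ (κ y)))) (kh (ε (Pi.single j ((1:A) ⊗ₜ[K] 1)))))
            := key j _ _
        _ = lD (κ x) ((rD (κ y)) (kh (ε (Pi.single j ((1:A) ⊗ₜ[K] 1))))) := by
            rw [hκθ (κ x), hκθ (κ y)]
        _ = kh (ε (Pi.single j (x ⊗ₜ[K] y))) := (key j x y).symm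
    have h := LinearMap.congr_fun this z
    simpa using h
  have mi2 : ∀ z, kh (ε (uMap z)) = kh (ε z) := by
    intro z
    have : (kh ∘ₗ ε) ∘ₗ uMap = kh ∘ₗ ε := by
      apply ext_fin (K := K) (B := A)
      intro j x y
      simp only [LinearMap.comp_apply]
      rw [hεu, hkl', hkr', keyw]
      exact (key j x y).symm
    have h := LinearMap.congr_fun this z
    simpa using h
  have mi3 : ∀ z, ε (uMap ((tmap θ).compLeft (Fin p0) z))
      = th (kh (ε ((tmap θ).compLeft (Fin p0) z))) := by
    intro z
    have : ε ∘ₗ (uMap ∘ₗ (tmap θ).compLeft (Fin p0))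
        = (th ∘ₗ (kh ∘ₗ ε)) ∘ₗ (tmap θ).compLeft (Fin p0) := by
      apply ext_fin (K := K) (B := D)
      intro j x y
      simp only [LinearMap.comp_apply]
      rw [compLeft_single, tmap_tmul, hεu, key, hthl', hthr', hκθ, hκθ, hw j]
    have h := LinearMap.congr_fun this z
    simpa using h
  -- block constructions
  set E0 := Ee (K := K) p0 p0 (A ⊗[K] A) with hE0
  set E1 := Ee (K := K) p1 p0 (A ⊗[K] A) with hE1
  set εpp : (Fin (p0 + p0) → A ⊗[K] A) →ₗ[K] XA :=
    (ε ∘ₗ LinearMap.coprod LinearMap.id uMap) ∘ₗ E0.toLinearMap with hεpp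
  set dpp0 : (Fin (p1 + p0) → A ⊗[K] A) →ₗ[K] (Fin (p0 + p0) → A ⊗[K] A) :=
    (E0.symm.toLinearMap ∘ₗ LinearMap.prod
      (d0 ∘ₗ LinearMap.fst K _ _ - uMap ∘ₗ LinearMap.snd K _ _)
      (LinearMap.snd K _ _)) ∘ₗ E1.toLinearMap with hdpp0
  set dpp1 : (Fin p2 → A ⊗[K] A) →ₗ[K] (Fin (p1 + p0) → A ⊗[K] A) :=
    E1.symm.toLinearMap ∘ₗ LinearMap.prod d1 0 with hdpp1
  set chi : (Fin (p0 + p0) → A ⊗[K] A) →ₗ[K] (Fin p0 → D ⊗[K] D) :=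
    ((tmap κ).compLeft (Fin p0) ∘ₗ LinearMap.coprod LinearMap.id LinearMap.id) ∘ₗ
      E0.toLinearMap with hchi
  set lam : (Fin p0 → D ⊗[K] D) →ₗ[K] (Fin (p0 + p0) → A ⊗[K] A) :=
    E0.symm.toLinearMap ∘ₗ LinearMap.prod 0 ((tmap θ).compLeft (Fin p0)) with hlam
  -- applied forms
  have hεpp' : ∀ x, εpp x = ε ((E0 x).1 + uMap ((E0 x).2)) := by
    intro x; simp [hεpp, LinearMap.coprod_apply]
  have hdpp0' : ∀ x, dpp0 x
      = E0.symm (d0 ((E1 x).1) - uMap ((E1 x).2), (E1 x).2) := by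
    intro x; simp [hdpp0, LinearMap.prod_apply]
  have hdpp1' : ∀ x, dpp1 x = E1.symm (d1 x, 0) := by
    intro x; simp [hdpp1, LinearMap.prod_apply]
  have hchi' : ∀ x, chi x
      = (tmap κ).compLeft (Fin p0) ((E0 x).1) + (tmap κ).compLeft (Fin p0) ((E0 x).2) := by
    intro x; simp [hchi, LinearMap.coprod_apply]
  have hlam' : ∀ v, lam v = E0.symm (0, (tmap θ).compLeft (Fin p0) v) := by
    intro v; simp [hlam, LinearMap.prod_apply]
  -- compLeft interaction with the block equivalences
  have hE0f : ∀ (g : (A ⊗[K] A) →ₗ[K] A ⊗[K] A) x,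
      E0 (g.compLeft (Fin (p0 + p0)) x)
        = (g.compLeft (Fin p0) ((E0 x).1), g.compLeft (Fin p0) ((E0 x).2)) :=
    fun g x => Ee_compLeft p0 p0 g x
  have hE0s : ∀ (g : (A ⊗[K] A) →ₗ[K] A ⊗[K] A) y z,
      g.compLeft (Fin (p0 + p0)) (E0.symm (y, z))
        = E0.symm (g.compLeft (Fin p0) y, g.compLeft (Fin p0) z) :=
    fun g y z => Ee_symm_compLeft p0 p0 g y z
  have hE1f : ∀ (g : (A ⊗[K] A) →ₗ[K] A ⊗[K] A) x,
      E1 (g.compLeft (Fin (p1 + p0)) x)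
        = (g.compLeft (Fin p1) ((E1 x).1), g.compLeft (Fin p0) ((E1 x).2)) :=
    fun g x => Ee_compLeft p1 p0 g x
  have hE1s : ∀ (g : (A ⊗[K] A) →ₗ[K] A ⊗[K] A) y z,
      g.compLeft (Fin (p1 + p0)) (E1.symm (y, z))
        = E1.symm (g.compLeft (Fin p1) y, g.compLeft (Fin p0) z) :=
    fun g y z => Ee_symm_compLeft p1 p0 g y z
  have hφψ : ∀ v, (tmap κ).compLeft (Fin p0) ((tmap θ).compLeft (Fin p0) v) = v := by
    intro v
    have h0 : tmap κ ∘ₗ tmap θ = (LinearMap.id : (D ⊗[K] D) →ₗ[K] D ⊗[K] D) := by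
      apply TensorProduct.ext'; intro x y
      simp [tmap_tmul, hκθ]
    have h1 : (tmap κ).compLeft (Fin p0) ∘ₗ (tmap θ).compLeft (Fin p0)
        = LinearMap.id := by
      rw [← compLeft_comp, h0, compLeft_id]
    exact LinearMap.congr_fun h1 v
  have hφl : ∀ (a : A) z, (tmap κ).compLeft (Fin p0) ((lmulT K A a).compLeft (Fin p0) z)
      = (lmulT K D (κ a)).compLeft (Fin p0) ((tmap κ).compLeft (Fin p0) z) := by
    intro a z
    have h1 : (tmap κ).compLeft (Fin p0) ∘ₗ (lmulT K A a).compLeft (Fin p0)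
        = (lmulT K D (κ a)).compLeft (Fin p0) ∘ₗ (tmap κ).compLeft (Fin p0) := by
      rw [← compLeft_comp, ← compLeft_comp, tmap_comp_lmulT]
    exact LinearMap.congr_fun h1 z
  have hφr : ∀ (b : A) z, (tmap κ).compLeft (Fin p0) ((rmulT K A b).compLeft (Fin p0) z)
      = (rmulT K D (κ b)).compLeft (Fin p0) ((tmap κ).compLeft (Fin p0) z) := by
    intro b z
    have h1 : (tmap κ).compLeft (Fin p0) ∘ₗ (rmulT K A b).compLeft (Fin p0)
        = (rmulT K D (κ b)).compLeft (Fin p0) ∘ₗ (tmap κ).compLeft (Fin p0) := by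
      rw [← compLeft_comp, ← compLeft_comp, tmap_comp_rmulT]
    exact LinearMap.congr_fun h1 z
  have hψl : ∀ (x : D) z, (tmap θ).compLeft (Fin p0) ((lmulT K D x).compLeft (Fin p0) z)
      = (lmulT K A (θ x)).compLeft (Fin p0) ((tmap θ).compLeft (Fin p0) z) := by
    intro x z
    have h1 : (tmap θ).compLeft (Fin p0) ∘ₗ (lmulT K D x).compLeft (Fin p0)
        = (lmulT K A (θ x)).compLeft (Fin p0) ∘ₗ (tmap θ).compLeft (Fin p0) := by
      rw [← compLeft_comp, ← compLeft_comp, tmap_comp_lmulT]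
    exact LinearMap.congr_fun h1 z
  have hψr : ∀ (y : D) z, (tmap θ).compLeft (Fin p0) ((rmulT K D y).compLeft (Fin p0) z)
      = (rmulT K A (θ y)).compLeft (Fin p0) ((tmap θ).compLeft (Fin p0) z) := by
    intro y z
    have h1 : (tmap θ).compLeft (Fin p0) ∘ₗ (rmulT K D y).compLeft (Fin p0)
        = (rmulT K A (θ y)).compLeft (Fin p0) ∘ₗ (tmap θ).compLeft (Fin p0) := by
      rw [← compLeft_comp, ← compLeft_comp, tmap_comp_rmulT]
    exact LinearMap.congr_fun h1 z
  refine ⟨εpp, dpp0, dpp1, chi, lam, ?_, ?_, ?_, ?_, ?_, ?_, ?_, ?_, ?_, ?_, ?_, ?_, ?_,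
    ?_, ?_, ?_, ?_, ?_⟩
  · -- εpp left compat
    intro a
    apply LinearMap.ext; intro x
    simp only [LinearMap.comp_apply]
    rw [hεpp', hεpp', hE0f]
    dsimp only
    simp only [map_add]
    rw [hu_l', hel', hel']
  · intro b
    apply LinearMap.ext; intro x
    simp only [LinearMap.comp_apply]
    rw [hεpp', hεpp', hE0f]
    dsimp only
    simp only [map_add]
    rw [hu_r', her', her']
  · -- dpp0 left compat
    intro a
    apply LinearMap.ext; intro x
    simp only [LinearMap.comp_apply]
    rw [hdpp0', hdpp0', hE1f]
    dsimp only
    rw [hd0l', hu_l', ← map_sub, hE0s]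
  · intro b
    apply LinearMap.ext; intro x
    simp only [LinearMap.comp_apply]
    rw [hdpp0', hdpp0', hE1f]
    dsimp only
    rw [hd0r', hu_r', ← map_sub, hE0s]
  · -- dpp1 compat
    intro a
    apply LinearMap.ext; intro x
    simp only [LinearMap.comp_apply]
    rw [hdpp1', hdpp1', hE1s]
    have := LinearMap.congr_fun (hd1l a) x
    simp only [LinearMap.comp_apply] at this
    rw [this, map_zero]
  · intro b
    apply LinearMap.ext; intro x
    simp only [LinearMap.comp_apply]
    rw [hdpp1', hdpp1', hE1s]
    have := LinearMap.congr_fun (hd1r b) x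
    simp only [LinearMap.comp_apply] at this
    rw [this, map_zero]
  · -- chi left compat
    intro a
    apply LinearMap.ext; intro x
    simp only [LinearMap.comp_apply]
    rw [hchi', hchi', hE0f]
    dsimp only
    rw [hφl, hφl, ← map_add]
  · intro b
    apply LinearMap.ext; intro x
    simp only [LinearMap.comp_apply]
    rw [hchi', hchi', hE0f]
    dsimp only
    rw [hφr, hφr, ← map_add]
  · -- lam left compat
    intro x
    apply LinearMap.ext; intro v
    simp only [LinearMap.comp_apply]
    rw [hlam', hlam', hψl, hE0s, map_zero]
  · intro y
    apply LinearMap.ext; intro v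
    simp only [LinearMap.comp_apply]
    rw [hlam', hlam', hψr, hE0s, map_zero]
  · -- eN ∘ chi = kh ∘ εpp
    apply LinearMap.ext; intro x
    simp only [LinearMap.comp_apply]
    rw [hchi', hεpp']
    simp only [map_add]
    rw [mi1, mi1, mi2]
  · -- εpp ∘ lam = th ∘ eN
    apply LinearMap.ext; intro v
    simp only [LinearMap.comp_apply]
    rw [hlam', hεpp', LinearEquiv.apply_symm_apply]
    dsimp only
    simp only [map_zero, zero_add]
    rw [mi3]
  · -- chi ∘ lam = id
    apply LinearMap.ext; intro v
    simp only [LinearMap.comp_apply, LinearMap.id_apply]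
    rw [hlam', hchi', LinearEquiv.apply_symm_apply]
    dsimp only
    simp only [map_zero, zero_add]
    rw [hφψ]
  · -- hUV for εpp
    intro x
    rw [hεpp']
    exact hUV _
  · -- hVU for εpp
    intro v hv
    obtain ⟨u0, hu0⟩ := hVU v hv
    refine ⟨E0.symm (u0, 0), ?_⟩
    rw [hεpp', LinearEquiv.apply_symm_apply]
    dsimp only
    simp only [map_zero, add_zero]
    exact hu0
  · -- ker εpp = range dpp0
    apply le_antisymm
    · intro x hx
      rw [LinearMap.mem_ker, hεpp'] at hx
      have hmem : (E0 x).1 + uMap ((E0 x).2) ∈ LinearMap.ker ε := hx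
      rw [hker0] at hmem
      obtain ⟨z, hz⟩ := hmem
      refine ⟨E1.symm (z, (E0 x).2), ?_⟩
      rw [hdpp0', LinearEquiv.apply_symm_apply]
      dsimp only
      rw [hz]
      have heq : (E0 x).1 + uMap ((E0 x).2) - uMap ((E0 x).2) = (E0 x).1 := by abel
      rw [heq, Prod.mk.eta]
      exact E0.symm_apply_apply x
    · rintro x ⟨z, rfl⟩
      rw [LinearMap.mem_ker, hεpp', hdpp0', LinearEquiv.apply_symm_apply]
      dsimp only
      rw [sub_add_cancel]
      exact hεd0 _
  · -- exactness at dpp0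
    intro hexact01
    apply le_antisymm
    · intro x hx
      rw [LinearMap.mem_ker, hdpp0'] at hx
      have h2 : (d0 ((E1 x).1) - uMap ((E1 x).2), (E1 x).2)
          = (0 : (Fin p0 → A ⊗[K] A) × (Fin p0 → A ⊗[K] A)) := by
        apply E0.symm.injective
        simpa using hx
      have h3 : (E1 x).2 = 0 := congrArg Prod.snd h2
      have h4 : d0 ((E1 x).1) = 0 := by
        have h2f := congrArg Prod.fst h2
        dsimp only at h2f
        rw [h3, map_zero, sub_zero] at h2f
        exact h2f
      have h5 : (E1 x).1 ∈ LinearMap.ker d0 := h4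
      rw [hexact01] at h5
      obtain ⟨z, hz⟩ := h5
      refine ⟨z, ?_⟩
      rw [hdpp1', hz, ← h3, Prod.mk.eta]
      exact E1.symm_apply_apply x
    · rintro x ⟨z, rfl⟩
      rw [LinearMap.mem_ker, hdpp0', hdpp1', LinearEquiv.apply_symm_apply]
      simp only [map_zero, sub_zero]
      have hd0d1 : d0 (d1 z) = 0 := by
        have : d1 z ∈ LinearMap.ker d0 := by
          rw [hexact01]; exact LinearMap.mem_range_self _ z
        exact this
      rw [hd0d1]
      simp
  · -- ker dpp1 = ker d1
    ext x
    rw [LinearMap.mem_ker, LinearMap.mem_ker, hdpp1']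
    constructor
    · intro hx
      have h2 : (d1 x, (0 : Fin p0 → A ⊗[K] A))
          = (0 : (Fin p1 → A ⊗[K] A) × (Fin p0 → A ⊗[K] A)) := by
        apply E1.symm.injective
        simpa using hx
      exact congrArg Prod.fst h2
    · intro hx
      rw [hx]
      simp

end Step

end RetractAux
namespace RetractAux

section EpsN

variable {K : Type*} [CommRing K] {A : Type*} {D : Type*}
  [Ring A] [Algebra K A] [Ring D] [Algebra K D]

theorem epsN_spec (κ : A →ₐ[K] D) (θ : D →ₐ[K] A) (hκθ : ∀ x : D, κ (θ x) = x)
    {XA : Type*} [AddCommGroup XA] [Module K XA]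
    {XD : Type*} [AddCommGroup XD] [Module K XD]
    (lA rA : A → XA →ₗ[K] XA) (lD rD : D → XD →ₗ[K] XD)
    (kh : XA →ₗ[K] XD) (th : XD →ₗ[K] XA)
    (hkl : ∀ a, kh ∘ₗ lA a = lD (κ a) ∘ₗ kh) (hkr : ∀ b, kh ∘ₗ rA b = rD (κ b) ∘ₗ kh)
    (V : Submodule K XD) (hVret : ∀ v ∈ V, kh (th v) = v)
    {c : ℕ} (ε : (Fin c → A ⊗[K] A) →ₗ[K] XA)
    (hel : ∀ a, ε ∘ₗ (lmulT K A a).compLeft (Fin c) = lA a ∘ₗ ε)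
    (her : ∀ b, ε ∘ₗ (rmulT K A b).compLeft (Fin c) = rA b ∘ₗ ε)
    (hUV : ∀ x, kh (ε x) ∈ V) (hVU : ∀ v ∈ V, ∃ u, ε u = th v) :
    (∀ x, (kh ∘ₗ ε ∘ₗ (tmap θ).compLeft (Fin c)) ∘ₗ (lmulT K D x).compLeft (Fin c)
        = lD x ∘ₗ (kh ∘ₗ ε ∘ₗ (tmap θ).compLeft (Fin c))) ∧
    (∀ y, (kh ∘ₗ ε ∘ₗ (tmap θ).compLeft (Fin c)) ∘ₗ (rmulT K D y).compLeft (Fin c)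
        = rD y ∘ₗ (kh ∘ₗ ε ∘ₗ (tmap θ).compLeft (Fin c))) ∧
    LinearMap.range (kh ∘ₗ ε ∘ₗ (tmap θ).compLeft (Fin c)) = V := by
  have hel' : ∀ (a : A) z, ε ((lmulT K A a).compLeft (Fin c) z) = lA a (ε z) := by
    intro a z; exact LinearMap.congr_fun (hel a) z
  have her' : ∀ (b : A) z, ε ((rmulT K A b).compLeft (Fin c) z) = rA b (ε z) := by
    intro b z; exact LinearMap.congr_fun (her b) z
  have hkl' : ∀ (a : A) m, kh (lA a m) = lD (κ a) (kh m) := by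
    intro a m; exact LinearMap.congr_fun (hkl a) m
  have hkr' : ∀ (b : A) m, kh (rA b m) = rD (κ b) (kh m) := by
    intro b m; exact LinearMap.congr_fun (hkr b) m
  have key : ∀ (j : Fin c) (x z : A),
      kh (ε (Pi.single j (x ⊗ₜ[K] z)))
        = lD (κ x) (rD (κ z) (kh (ε (Pi.single j ((1:A) ⊗ₜ[K] (1:A)))))) := by
    intro j x z
    have h := map_single_tmul (K := K) (B := A) (kh ∘ₗ ε)
      (fun a => lD (κ a)) (fun b => rD (κ b))
      (fun a => by
        apply LinearMap.ext; intro z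
        simp only [LinearMap.comp_apply]
        rw [hel', hkl'])
      (fun b => by
        apply LinearMap.ext; intro z
        simp only [LinearMap.comp_apply]
        rw [her', hkr'])
      j x z
    simpa using h
  have hψl : ∀ (x : D) z, (tmap θ).compLeft (Fin c) ((lmulT K D x).compLeft (Fin c) z)
      = (lmulT K A (θ x)).compLeft (Fin c) ((tmap θ).compLeft (Fin c) z) := by
    intro x z
    have h1 : (tmap θ).compLeft (Fin c) ∘ₗ (lmulT K D x).compLeft (Fin c)
        = (lmulT K A (θ x)).compLeft (Fin c) ∘ₗ (tmap θ).compLeft (Fin c) := by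
      rw [← compLeft_comp, ← compLeft_comp, tmap_comp_lmulT]
    exact LinearMap.congr_fun h1 z
  have hψr : ∀ (y : D) z, (tmap θ).compLeft (Fin c) ((rmulT K D y).compLeft (Fin c) z)
      = (rmulT K A (θ y)).compLeft (Fin c) ((tmap θ).compLeft (Fin c) z) := by
    intro y z
    have h1 : (tmap θ).compLeft (Fin c) ∘ₗ (rmulT K D y).compLeft (Fin c)
        = (rmulT K A (θ y)).compLeft (Fin c) ∘ₗ (tmap θ).compLeft (Fin c) := by
      rw [← compLeft_comp, ← compLeft_comp, tmap_comp_rmulT]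
    exact LinearMap.congr_fun h1 z
  have mi1 : ∀ z, kh (ε ((tmap θ).compLeft (Fin c) ((tmap κ).compLeft (Fin c) z)))
      = kh (ε z) := by
    intro z
    have h0 : (kh ∘ₗ ε) ∘ₗ ((tmap θ).compLeft (Fin c) ∘ₗ (tmap κ).compLeft (Fin c))
        = kh ∘ₗ ε := by
      apply ext_fin (K := K) (B := A)
      intro j x y
      simp only [LinearMap.comp_apply]
      rw [compLeft_single, tmap_tmul, compLeft_single, tmap_tmul]
      calc kh (ε (Pi.single j (θ (κ x) ⊗ₜ[K] θ (κ y))))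
          = lD (κ (θ (κ x))) ((rD (κ (θ (κ y)))) (kh (ε (Pi.single j ((1:A) ⊗ₜ[K] 1)))))
            := key j _ _
        _ = lD (κ x) ((rD (κ y)) (kh (ε (Pi.single j ((1:A) ⊗ₜ[K] 1))))) := by
            rw [hκθ (κ x), hκθ (κ y)]
        _ = kh (ε (Pi.single j (x ⊗ₜ[K] y))) := (key j x y).symm
    have h := LinearMap.congr_fun h0 z
    simpa using h
  refine ⟨?_, ?_, ?_⟩
  · intro x
    apply LinearMap.ext; intro z
    simp only [LinearMap.comp_apply]
    rw [hψl, hel', hkl', hκθ]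
  · intro y
    apply LinearMap.ext; intro z
    simp only [LinearMap.comp_apply]
    rw [hψr, her', hkr', hκθ]
  · apply le_antisymm
    · rintro _ ⟨x, rfl⟩
      simp only [LinearMap.comp_apply]
      exact hUV _
    · intro v hv
      obtain ⟨u, hu⟩ := hVU v hv
      refine ⟨(tmap κ).compLeft (Fin c) u, ?_⟩
      simp only [LinearMap.comp_apply]
      rw [mi1, hu]
      exact hVret v hv

end EpsN

universe uK uA uD

set_option maxHeartbeats 1000000 in
theorem master {K : Type uK} [CommRing K] {A : Type uA} {D : Type uD}
    [Ring A] [Algebra K A] [Ring D] [Algebra K D]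
    (κ : A →ₐ[K] D) (θ : D →ₐ[K] A) (hκθ : ∀ x : D, κ (θ x) = x) (n : ℕ) :
    ∀ {XA : Type uA} [AddCommGroup XA] [Module K XA]
      {XD : Type uD} [AddCommGroup XD] [Module K XD]
      (lA rA : A → XA →ₗ[K] XA) (lD rD : D → XD →ₗ[K] XD)
      (kh : XA →ₗ[K] XD) (th : XD →ₗ[K] XA),
      (∀ a, kh ∘ₗ lA a = lD (κ a) ∘ₗ kh) → (∀ b, kh ∘ₗ rA b = rD (κ b) ∘ₗ kh) →
      (∀ x, th ∘ₗ lD x = lA (θ x) ∘ₗ th) → (∀ y, th ∘ₗ rD y = rA (θ y) ∘ₗ th) →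
      ∀ (V : Submodule K XD), (∀ v ∈ V, kh (th v) = v) →
      ∀ (r : ℕ → ℕ) (d : ∀ i, (Fin (r (i+1)) → A ⊗[K] A) →ₗ[K] (Fin (r i) → A ⊗[K] A))
        (ε : (Fin (r 0) → A ⊗[K] A) →ₗ[K] XA),
      (∀ i a, d i ∘ₗ (lmulT K A a).compLeft (Fin (r (i+1)))
          = (lmulT K A a).compLeft (Fin (r i)) ∘ₗ d i) →
      (∀ i b, d i ∘ₗ (rmulT K A b).compLeft (Fin (r (i+1)))
          = (rmulT K A b).compLeft (Fin (r i)) ∘ₗ d i) →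
      (∀ a, ε ∘ₗ (lmulT K A a).compLeft (Fin (r 0)) = lA a ∘ₗ ε) →
      (∀ b, ε ∘ₗ (rmulT K A b).compLeft (Fin (r 0)) = rA b ∘ₗ ε) →
      (∀ x, kh (ε x) ∈ V) → (∀ v ∈ V, ∃ u, ε u = th v) →
      (0 < n → LinearMap.ker ε = LinearMap.range (d 0)) →
      (∀ i, i + 1 < n → LinearMap.ker (d i) = LinearMap.range (d (i+1))) →
      ∃ (ρ : ℕ → ℕ)
        (δ : ∀ i, (Fin (ρ (i+1)) → D ⊗[K] D) →ₗ[K] (Fin (ρ i) → D ⊗[K] D))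
        (eN : (Fin (ρ 0) → D ⊗[K] D) →ₗ[K] XD),
        (∀ i x, δ i ∘ₗ (lmulT K D x).compLeft (Fin (ρ (i+1)))
            = (lmulT K D x).compLeft (Fin (ρ i)) ∘ₗ δ i) ∧
        (∀ i y, δ i ∘ₗ (rmulT K D y).compLeft (Fin (ρ (i+1)))
            = (rmulT K D y).compLeft (Fin (ρ i)) ∘ₗ δ i) ∧
        (∀ x, eN ∘ₗ (lmulT K D x).compLeft (Fin (ρ 0)) = lD x ∘ₗ eN) ∧
        (∀ y, eN ∘ₗ (rmulT K D y).compLeft (Fin (ρ 0)) = rD y ∘ₗ eN) ∧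
        LinearMap.range eN = V ∧
        (0 < n → LinearMap.ker eN = LinearMap.range (δ 0)) ∧
        (∀ i, i + 1 < n → LinearMap.ker (δ i) = LinearMap.range (δ (i+1))) := by
  induction n with
  | zero =>
    intro XA _ _ XD _ _ lA rA lD rD kh th hkl hkr hthl hthr V hVret r d ε hdl hdr
      hel her hUV hVU hker hex
    obtain ⟨hc1, hc2, hrange⟩ := epsN_spec κ θ hκθ lA rA lD rD kh th hkl hkr V hVret
      ε hel her hUV hVU
    refine ⟨r, fun _ => 0, kh ∘ₗ ε ∘ₗ (tmap θ).compLeft (Fin (r 0)),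
      ?_, ?_, hc1, hc2, hrange, ?_, ?_⟩
    · intro i x; simp
    · intro i y; simp
    · intro h; exact absurd h (lt_irrefl 0)
    · intro i h; exact absurd h (by omega)
  | succ n ih =>
    intro XA _ _ XD _ _ lA rA lD rD kh th hkl hkr hthl hthr V hVret r d ε hdl hdr
      hel her hUV hVU hker hex
    obtain ⟨hc1, hc2, hrange⟩ := epsN_spec κ θ hκθ lA rA lD rD kh th hkl hkr V hVret
      ε hel her hUV hVU
    obtain ⟨εpp, dpp0, dpp1, chi, lam, heppl, heppr, hdpp0l, hdpp0r, hdpp1l, hdpp1r,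
      hchil, hchir, hlaml, hlamr, hP1, hP2, hP3, hUVpp, hVUpp, hexpp0, hexpp01, hkerpp1⟩ :=
      step κ θ hκθ lA rA lD rD kh th hkl hkr hthl hthr V hVret (d 0) (d 1) ε
        (hdl 0) (hdr 0) (hdl 1) (hdr 1) hel her hUV hVU (hker (Nat.succ_pos n))
    set eN : (Fin (r 0) → D ⊗[K] D) →ₗ[K] XD :=
      kh ∘ₗ ε ∘ₗ (tmap θ).compLeft (Fin (r 0)) with heN
    -- recursive data
    obtain ⟨ρ, δ, e1, c1, c2, c3, c4, hrange1, hker1, hex1⟩ :=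
      ih (XA := Fin (r 0 + r 0) → A ⊗[K] A) (XD := Fin (r 0) → D ⊗[K] D)
        (fun a => (lmulT K A a).compLeft (Fin (r 0 + r 0)))
        (fun b => (rmulT K A b).compLeft (Fin (r 0 + r 0)))
        (fun x => (lmulT K D x).compLeft (Fin (r 0)))
        (fun y => (rmulT K D y).compLeft (Fin (r 0)))
        chi lam hchil hchir hlaml hlamr
        (LinearMap.ker eN)
        (fun v _ => LinearMap.congr_fun hP3 v)
        (fun i => match i with
          | 0 => r 1 + r 0
          | (j+1) => r (j+2))
        (fun i => match i with
          | 0 => dpp1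
          | (j+1) => d (j+2))
        dpp0
        (fun i => match i with
          | 0 => hdpp1l
          | (j+1) => hdl (j+2))
        (fun i => match i with
          | 0 => hdpp1r
          | (j+1) => hdr (j+2))
        hdpp0l hdpp0r
        (fun x => by
          simp only [LinearMap.mem_ker]
          have h2 : εpp (dpp0 x) = 0 := by
            have : dpp0 x ∈ LinearMap.ker εpp := by
              rw [hexpp0]; exact LinearMap.mem_range_self _ x
            exact this
          have h1 := LinearMap.congr_fun hP1 (dpp0 x)
          simp only [LinearMap.comp_apply] at h1
          rw [h1, h2, map_zero])
        (fun v hv => by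
          have h1 : εpp (lam v) = 0 := by
            have h2 := LinearMap.congr_fun hP2 v
            simp only [LinearMap.comp_apply] at h2
            simp only [LinearMap.mem_ker, heN] at hv
            simp only [LinearMap.comp_apply] at hv
            rw [h2]
            simp only [heN, LinearMap.comp_apply]
            rw [hv, map_zero]
          have h3 : lam v ∈ LinearMap.range dpp0 := by
            rw [← hexpp0]; exact h1
          obtain ⟨u, hu⟩ := h3
          exact ⟨u, hu⟩)
        (fun hn => hexpp01 (hex 0 (by omega)))
        (fun i hi => match i, hi with
          | 0, hi => by rw [hkerpp1]; exact hex 1 (by omega)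
          | (j+1), hi => hex (j+2) (by omega))
    refine ⟨fun i => match i with
        | 0 => r 0
        | (j+1) => ρ j,
      fun i => match i with
        | 0 => e1
        | (j+1) => δ j,
      eN, ?_, ?_, hc1, hc2, hrange, ?_, ?_⟩
    · intro i x
      cases i with
      | zero => exact c3 x
      | succ j => exact c1 j x
    · intro i y
      cases i with
      | zero => exact c4 y
      | succ j => exact c2 j y
    · intro _
      exact hrange1.symm
    · intro i hi
      cases i with
      | zero => exact hker1 (by omega)
      | succ j => exact hex1 j (by omega)

end RetractAux


/-- If the `K`-algebra `D` is a retract of the `K`-algebra `A` (via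
`κ : A →ₐ[K] D`, `θ : D →ₐ[K] A` with `κ ∘ θ = id`) and `A` is of type bi-`FP n`, then `D`
is of type bi-`FP n`. -/
theorem algebra_retract_biFP
    (K : Type*) [CommRing K] (A D : Type*) [Ring A] [Algebra K A] [Ring D] [Algebra K D]
    (n : ℕ) (κ : A →ₐ[K] D) (θ : D →ₐ[K] A) (hκθ : κ.comp θ = AlgHom.id K D)
    (h : BiFP K A n) :
    BiFP K D n := by
  have hκθ' : ∀ x : D, κ (θ x) = x := by
    intro x
    have := AlgHom.congr_fun hκθ x
    simpa using this
  obtain ⟨r, d, e, h1, h2, h3, h4, hsurj, hker, hex⟩ := h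
  obtain ⟨ρ, δ, eN, c1, c2, c3, c4, hrange, hkerN, hexN⟩ :=
    RetractAux.master κ θ hκθ' n
      (fun a => LinearMap.mulLeft K a) (fun b => LinearMap.mulRight K b)
      (fun x => LinearMap.mulLeft K x) (fun y => LinearMap.mulRight K y)
      κ.toLinearMap θ.toLinearMap
      (fun a => by ext m; simp [map_mul])
      (fun b => by ext m; simp [map_mul])
      (fun x => by ext m; simp [map_mul])
      (fun y => by ext m; simp [map_mul])
      ⊤ (fun v _ => hκθ' v)
      r d e h1 h2 h3 h4
      (fun x => trivial)
      (fun v _ => hsurj (θ v))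
      hker hex
  exact ⟨ρ, δ, eN, c1, c2, c3, c4, LinearMap.range_eq_top.mp hrange, hkerN, hexN⟩
end
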